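/- arXiv:2505.00556 — 11 statements merged into one kernel-verified Lean document; each statement's English description precedes it below -/
import Mathlib

section
/- If F is a subfield of ℝ such that the field extension ℝ/F is finite (i.e., ℝ is a finite-dimensional vector space over F), then F = ℝ. -/
open Polynomial IntermediateField Module Complex

-- Lemma B: no degree-p extension ℂ/M with i ∈ M
lemma lemB {M : Type} [Field M] [Algebra M ℂ] [FiniteDimensional M ℂ]
    (hI : Complex.I ∈ Set.range (algebraMap M ℂ)) {p : ℕ} (hp : p.Prime)
    (hrank : Module.finrank M ℂ = p) : False := by
  have hchar : CharZero M := by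
    have : CharP M 0 := (algebraMap M ℂ).charP (algebraMap M ℂ).injective 0
    exact CharP.charP_to_charZero M
  have halg : Algebra.IsAlgebraic M ℂ := Algebra.IsAlgebraic.of_finite M ℂ
  have hac : IsAlgClosure M ℂ := ⟨Complex.isAlgClosed, halg⟩
  have hgal : IsGalois M ℂ := ⟨⟩
  -- primitive p-th root of unity in M
  have hζ : IsPrimitiveRoot (Complex.exp (2 * Real.pi * Complex.I / p)) p :=
    Complex.isPrimitiveRoot_exp p hp.ne_zero
  set ζ := Complex.exp (2 * Real.pi * Complex.I / p) with hζdef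
  have hint : IsIntegral M ζ := IsIntegral.of_finite M ζ
  have hdvdcyc : minpoly M ζ ∣ Polynomial.cyclotomic p M := by
    apply minpoly.dvd
    have : (Polynomial.cyclotomic p ℂ).IsRoot ζ := hζ.isRoot_cyclotomic hp.pos
    rwa [Polynomial.aeval_def, Polynomial.eval₂_eq_eval_map, Polynomial.map_cyclotomic]
  have hdeg : (minpoly M ζ).natDegree ≤ p - 1 := by
    have := Polynomial.natDegree_le_of_dvd hdvdcyc (Polynomial.cyclotomic_ne_zero p M)
    rwa [Polynomial.natDegree_cyclotomic, Nat.totient_prime hp] at this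
  have hd1 : Module.finrank M M⟮ζ⟯ = 1 := by
    have hdvd : Module.finrank M M⟮ζ⟯ ∣ p := by
      rw [← hrank]
      exact ⟨Module.finrank M⟮ζ⟯ ℂ, (Module.finrank_mul_finrank M M⟮ζ⟯ ℂ).symm⟩
    rcases (Nat.Prime.eq_one_or_self_of_dvd hp _ hdvd) with h1 | hpe
    · exact h1
    · exfalso
      rw [IntermediateField.adjoin.finrank hint] at hpe
      have := hp.two_le
      omega
  have hζbot : ζ ∈ (⊥ : IntermediateField M ℂ) := by
    rw [← IntermediateField.finrank_eq_one_iff.mp hd1]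
    exact IntermediateField.mem_adjoin_simple_self M ζ
  rw [IntermediateField.mem_bot] at hζbot
  obtain ⟨z, hz⟩ := hζbot
  have hzprim : IsPrimitiveRoot z p :=
    IsPrimitiveRoot.of_map_of_injective (hz ▸ hζ) (algebraMap M ℂ).injective
  have hK : (primitiveRoots (Module.finrank M ℂ) M).Nonempty := by
    rw [hrank]
    exact ⟨z, (mem_primitiveRoots hp.pos).mpr hzprim⟩
  have hcyc : IsCyclic (ℂ ≃ₐ[M] ℂ) := by
    haveI : Fact p.Prime := ⟨hp⟩
    exact isCyclic_of_prime_card (p := p) (by rw [IsGalois.card_aut_eq_finrank, hrank])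
  obtain ⟨α, ⟨a, ha⟩, hα⟩ := exists_root_adjoin_eq_top_of_isCyclic M ℂ hK
  have hirr : Irreducible (X ^ (Module.finrank M ℂ) - C a) :=
    irreducible_X_pow_sub_C_of_root_adjoin_eq_top ha.symm hα
  rw [hrank] at hirr
  have ha' : ∀ b : M, b ^ p ≠ a := fun b =>
    pow_ne_of_irreducible_X_pow_sub_C hirr dvd_rfl hp.ne_one b
  have ha0 : a ≠ 0 := by
    intro h
    exact ha' 0 (by rw [h]; exact zero_pow hp.ne_zero)
  rcases hp.eq_two_or_odd' with h2 | hodd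
  · -- p = 2
    subst h2
    obtain ⟨s, hs⟩ := IsAlgClosed.exists_pow_nat_eq (k := ℂ) (algebraMap M ℂ a) (n := 4)
      (by norm_num)
    have hs0 : s ≠ 0 := by
      rintro rfl
      exact ha0 ((algebraMap M ℂ).injective (by rw [map_zero, ← hs]; ring)).symm
    have claim : ∀ σ : ℂ ≃ₐ[M] ℂ, σ (s ^ 2) = s ^ 2 := by
      intro σ
      have h4 : (σ s) ^ 4 = s ^ 4 := by
        rw [← map_pow, hs, AlgEquiv.commutes]
      set η := σ s / s with hηdef
      have hσs : σ s = η * s := by rw [hηdef, div_mul_cancel₀ _ hs0]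
      have hη4 : η ^ 4 = 1 := by
        rw [hηdef, div_pow, h4, div_self (pow_ne_zero _ hs0)]
      have hηmem : η ∈ Set.range (algebraMap M ℂ) := by
        have hfac : (η - 1) * (η + 1) * ((η - Complex.I) * (η + Complex.I)) = 0 := by
          have hI2 : Complex.I ^ 2 = -1 := Complex.I_sq
          linear_combination hη4 + (1 - η ^ 2) * hI2
        obtain ⟨j, hj⟩ := hI
        rcases mul_eq_zero.mp hfac with h | h
        · rcases mul_eq_zero.mp h with h | h
          · exact ⟨1, by rw [map_one]; linear_combination -h⟩
          · exact ⟨-1, by rw [map_neg, map_one]; linear_combination -h⟩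
        · rcases mul_eq_zero.mp h with h | h
          · exact ⟨j, by rw [hj]; linear_combination -h⟩
          · exact ⟨-j, by rw [map_neg, hj]; linear_combination -h⟩
      obtain ⟨m, hm⟩ := hηmem
      have hσσ : σ (σ s) = s := by
        have hord : σ ^ 2 = 1 := by
          have hcard : Fintype.card (ℂ ≃ₐ[M] ℂ) = 2 := by
            rw [← Nat.card_eq_fintype_card, IsGalois.card_aut_eq_finrank, hrank]
          rw [← hcard]
          exact pow_card_eq_one
        calc σ (σ s) = (σ ^ 2) s := by rw [pow_two, AlgEquiv.mul_apply]
        _ = s := by rw [hord]; rfl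
      have hη2 : η ^ 2 = 1 := by
        have : η * (η * s) = s := by
          have hση : σ η = η := by rw [← hm, AlgEquiv.commutes]
          calc η * (η * s) = σ η * σ s := by rw [hση, hσs]
          _ = σ (η * s) := (map_mul σ η s).symm
          _ = σ (σ s) := by rw [← hσs]
          _ = s := hσσ
        have h0 : (η ^ 2 - 1) * s = 0 := by linear_combination this
        rcases mul_eq_zero.mp h0 with h | h
        · linear_combination h
        · exact absurd h hs0
      calc σ (s ^ 2) = (σ s) ^ 2 := map_pow σ s 2
      _ = η ^ 2 * s ^ 2 := by rw [hσs]; ring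
      _ = s ^ 2 := by rw [hη2, one_mul]
    have hbot : s ^ 2 ∈ (⊥ : IntermediateField M ℂ) := by
      rw [← IsGalois.fixedField_fixingSubgroup (⊥ : IntermediateField M ℂ)]
      have htop : IntermediateField.fixingSubgroup (⊥ : IntermediateField M ℂ) = ⊤ := by
        ext σ
        simp only [Subgroup.mem_top, iff_true]
        rw [IntermediateField.mem_fixingSubgroup_iff]
        intro x hx
        rw [IntermediateField.mem_bot] at hx
        obtain ⟨y, rfl⟩ := hx
        exact σ.commutes y
      rw [htop]
      exact fun σ => claim σ
    rw [IntermediateField.mem_bot] at hbot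
    obtain ⟨b, hb⟩ := hbot
    apply ha' b
    apply (algebraMap M ℂ).injective
    rw [map_pow, hb, ← hs]
    ring
  · -- p odd
    have hp2 : p ≠ 2 := by
      rintro rfl
      exact (Nat.not_odd_iff_even.mpr even_two) hodd
    have hirr2 : Irreducible (X ^ (p ^ 2) - C a) :=
      X_pow_sub_C_irreducible_of_prime_pow hp hp2 2 ha'
    obtain ⟨β, hβ⟩ := IsAlgClosed.exists_pow_nat_eq (k := ℂ) (algebraMap M ℂ a) (n := p ^ 2)
      (pow_pos hp.pos 2)
    have hmin : minpoly M β = X ^ (p ^ 2) - C a := by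
      symm
      apply minpoly.eq_of_irreducible_of_monic hirr2 ?_
        (monic_X_pow_sub_C a (pow_ne_zero 2 hp.ne_zero))
      simp [hβ]
    have hfr : Module.finrank M M⟮β⟯ = p ^ 2 := by
      rw [IntermediateField.adjoin.finrank (IsIntegral.of_finite M β), hmin,
        natDegree_X_pow_sub_C]
    have hle : Module.finrank M M⟮β⟯ ≤ Module.finrank M ℂ := by
      exact Nat.le_of_dvd Module.finrank_pos
        ⟨Module.finrank M⟮β⟯ ℂ, (Module.finrank_mul_finrank M M⟮β⟯ ℂ).symm⟩
    rw [hfr, hrank] at hle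
    nlinarith [hp.two_le]


lemma lemA {M : Type} [Field M] [Algebra M ℂ] [FiniteDimensional M ℂ]
    (hI : Complex.I ∈ Set.range (algebraMap M ℂ)) : Module.finrank M ℂ = 1 := by
  by_contra hne
  have hchar : CharZero M := by
    have : CharP M 0 := (algebraMap M ℂ).charP (algebraMap M ℂ).injective 0
    exact CharP.charP_to_charZero M
  have halg : Algebra.IsAlgebraic M ℂ := Algebra.IsAlgebraic.of_finite M ℂ
  have hac : IsAlgClosure M ℂ := ⟨Complex.isAlgClosed, halg⟩
  have hgal : IsGalois M ℂ := ⟨⟩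
  have hp : (Module.finrank M ℂ).minFac.Prime := Nat.minFac_prime hne
  haveI : Fact (Module.finrank M ℂ).minFac.Prime := ⟨hp⟩
  have hdvd : (Module.finrank M ℂ).minFac ∣ Fintype.card (ℂ ≃ₐ[M] ℂ) := by
    rw [← Nat.card_eq_fintype_card, IsGalois.card_aut_eq_finrank]
    exact Nat.minFac_dvd _
  obtain ⟨g, hg⟩ := exists_prime_orderOf_dvd_card (Module.finrank M ℂ).minFac hdvd
  set E := IntermediateField.fixedField (Subgroup.zpowers g) with hE
  haveI : FiniteDimensional E ℂ := FiniteDimensional.right M E ℂ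
  have hfr : Module.finrank E ℂ = (Module.finrank M ℂ).minFac := by
    classical
    rw [hE, IntermediateField.finrank_fixedField_eq_card, Nat.card_zpowers, hg]
  have hIE : Complex.I ∈ Set.range (algebraMap E ℂ) := by
    obtain ⟨j, hj⟩ := hI
    have hmem : Complex.I ∈ E := by
      rw [← hj]
      exact E.algebraMap_mem j
    exact ⟨⟨Complex.I, hmem⟩, rfl⟩
  exact lemB hIE hp hfr

set_option synthInstance.maxHeartbeats 1000000 in
set_option maxHeartbeats 2000000 in
theorem stmt_1 (F : Subfield ℝ) (h : Module.Finite F ℝ) : F = ⊤ := by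
  letI : Algebra F ℂ := inferInstance
  haveI : IsScalarTower F ℝ ℂ := IsScalarTower.of_algebraMap_eq (fun x => rfl)
  haveI : FiniteDimensional F ℝ := h
  haveI : FiniteDimensional F ℂ := Module.Finite.trans ℝ ℂ
  set E := IntermediateField.adjoin F {Complex.I} with hEdef
  haveI : FiniteDimensional E ℂ := FiniteDimensional.right F E ℂ
  have hIE : Complex.I ∈ Set.range (algebraMap E ℂ) :=
    ⟨⟨Complex.I, IntermediateField.mem_adjoin_simple_self F Complex.I⟩, rfl⟩
  have h1 : Module.finrank E ℂ = 1 := lemA hIE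
  have h2 : Module.finrank F E ≤ 2 := by
    rw [hEdef, IntermediateField.adjoin.finrank (IsIntegral.of_finite F Complex.I)]
    have hdvd : minpoly F Complex.I ∣ X ^ 2 + C (1 : F) := by
      apply minpoly.dvd
      simp [Complex.I_sq]
    have := Polynomial.natDegree_le_of_dvd hdvd (monic_X_pow_add_C (1 : F) two_ne_zero).ne_zero
    rwa [Polynomial.natDegree_X_pow_add_C] at this
  have h3 : Module.finrank F ℝ * 2 = Module.finrank F ℂ := by
    rw [← Complex.finrank_real_complex]
    exact Module.finrank_mul_finrank F ℝ ℂ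
  have h4 : Module.finrank F E * Module.finrank E ℂ = Module.finrank F ℂ :=
    Module.finrank_mul_finrank F E ℂ
  rw [h1, mul_one] at h4
  have hpos : 0 < Module.finrank F ℝ := Module.finrank_pos
  have h5 : Module.finrank F ℝ = 1 := by omega
  have hspan := (finrank_eq_one_iff_of_nonzero (K := F) (1 : ℝ) one_ne_zero).mp h5
  rw [eq_top_iff]
  intro x _
  have hx : x ∈ Submodule.span F {(1 : ℝ)} := by rw [hspan]; trivial
  obtain ⟨c, hc⟩ := Submodule.mem_span_singleton.mp hx
  have : (c : ℝ) = x := by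
    rw [← hc]
    simp [Subfield.smul_def]
  exact this ▸ c.2
end

section
/- If A is a subring of ℝ and there exists x ∈ ℝ such that A + x·A = ℝ (where A + x·A = {a + x·b : a, b ∈ A}), then A = ℝ. -/
theorem stmt_2 (A : Subring ℝ) (x : ℝ)
    (h : {z : ℝ | ∃ a ∈ A, ∃ b ∈ A, z = a + x * b} = Set.univ) :
    A = ⊤ := by
  have hall : ∀ z : ℝ, ∃ a ∈ A, ∃ b ∈ A, z = a + x * b := fun z =>
    (h ▸ Set.mem_univ z : z ∈ {z : ℝ | ∃ a ∈ A, ∃ b ∈ A, z = a + x * b})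
  by_cases hx : x ∈ A
  · ext z
    simp only [Subring.mem_top, iff_true]
    obtain ⟨a, ha, b, hb, hz⟩ := hall z
    exact hz ▸ A.add_mem ha (A.mul_mem hx hb)
  exfalso
  -- A is closed under inverses (determinant trick)
  have hinv : ∀ a : ℝ, a ∈ A → a ≠ 0 → a⁻¹ ∈ A := by
    intro a ha ha0
    obtain ⟨u, hu, v, hv, huv⟩ := hall a⁻¹
    obtain ⟨s, hs, t, ht, hst⟩ := hall (x * a⁻¹)
    have e1 : a * u + a * (x * v) = 1 := by
      calc a * u + a * (x * v) = a * (u + x * v) := by ring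
        _ = a * a⁻¹ := by rw [huv]
        _ = 1 := mul_inv_cancel₀ ha0
    have e2 : a * s + a * (x * t) = x := by
      calc a * s + a * (x * t) = a * (s + x * t) := by ring
        _ = a * (x * a⁻¹) := by rw [hst]
        _ = x := by field_simp
    have h1 : a * ((u + t) - a * (u * t - v * s)) = 1 := by
      linear_combination (1 - a * t) * e1 + (a * v) * e2
    have key : a⁻¹ = (u + t) - a * (u * t - v * s) :=
      inv_eq_of_mul_eq_one_right h1
    rw [key]
    exact A.sub_mem (A.add_mem hu ht)
      (A.mul_mem ha (A.sub_mem (A.mul_mem hu ht) (A.mul_mem hv hs)))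
  -- independence of 1, x over A
  have hindep : ∀ a ∈ A, ∀ b ∈ A, a + x * b = 0 → a = 0 ∧ b = 0 := by
    intro a ha b hb hab
    by_cases hb0 : b = 0
    · subst hb0; constructor <;> [linarith [hab]; rfl]
    · exfalso
      apply hx
      have hxe : x = -a * b⁻¹ := by
        field_simp
        linarith [hab]
      rw [hxe]
      exact A.mul_mem (A.neg_mem ha) (hinv b hb hb0)
  -- x satisfies a quadratic over A
  obtain ⟨q, hq, p, hp, hx2⟩ := hall (x * x)
  have h2A : (2 : ℝ) ∈ A := by
    have := A.add_mem A.one_mem A.one_mem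
    norm_num at this ⊢
  have hhalf : (2 : ℝ)⁻¹ ∈ A := hinv 2 h2A two_ne_zero
  set c : ℝ := p * (2 : ℝ)⁻¹ with hc_def
  have hcA : c ∈ A := A.mul_mem hp hhalf
  set y : ℝ := x - c with hy
  have hyA : y ∉ A := by
    intro hyA
    apply hx
    have : x = y + c := by rw [hy]; ring
    rw [this]; exact A.add_mem hyA hcA
  set d : ℝ := q + c * c with hd_def
  have hdA : d ∈ A := A.add_mem hq (A.mul_mem hcA hcA)
  have h2c : 2 * c = p := by rw [hc_def]; ring
  have hyd : y * y = d := by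
    rw [hy, hd_def]
    linear_combination hx2 - x * h2c
  have hy0 : y ≠ 0 := fun h0 => hyA (h0 ▸ A.zero_mem)
  have hd0 : (0 : ℝ) < d := hyd ▸ mul_self_pos.mpr hy0
  -- independence of 1, y over A
  have hindepY : ∀ a ∈ A, ∀ b ∈ A, a + y * b = 0 → a = 0 ∧ b = 0 := by
    intro a ha b hb hab
    have hab' : (a - c * b) + x * b = 0 := by rw [hy] at hab; linarith [hab]
    obtain ⟨h1, h2⟩ := hindep _ (A.sub_mem ha (A.mul_mem hcA hb)) _ hb hab'
    subst h2
    constructor <;> linarith [h1]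
  -- the fourth root of d gives a contradiction
  set t : ℝ := Real.sqrt (Real.sqrt d) with ht_def
  have ht2 : t * t = Real.sqrt d := Real.mul_self_sqrt (Real.sqrt_nonneg d)
  have hs0 : Real.sqrt d * Real.sqrt d = d := Real.mul_self_sqrt hd0.le
  have main : ∀ e : ℝ, e ∈ A → e * e = 1 → t * t ≠ e * y := by
    intro e heA he1 hte
    obtain ⟨a, haA, b, hbA, hrep⟩ := hall t
    set a2 : ℝ := a + c * b with ha2_def
    have ha2A : a2 ∈ A := A.add_mem haA (A.mul_mem hcA hbA)
    have ht' : t = a2 + y * b := by rw [hrep, ha2_def, hy]; ring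
    have h0 : (a2 * a2 + d * (b * b)) + y * (2 * (a2 * b) - e) = 0 := by
      linear_combination hte - (t + a2 + y * b) * ht' - b * b * hyd
    obtain ⟨h1, h2⟩ := hindepY _
      (A.add_mem (A.mul_mem ha2A ha2A) (A.mul_mem hdA (A.mul_mem hbA hbA))) _
      (A.sub_mem (A.mul_mem h2A (A.mul_mem ha2A hbA)) heA) h0
    have hbb : b * b ≤ 0 := by
      by_contra hpos
      push_neg at hpos
      nlinarith [mul_pos hd0 hpos, mul_self_nonneg a2]
    have hb0 : b = 0 := mul_self_eq_zero.mp (le_antisymm hbb (mul_self_nonneg b))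
    subst hb0
    have : e = 0 := by linarith [h2]
    rw [this] at he1
    norm_num at he1
  have hcases : t * t = y ∨ t * t = -y := by
    have : (t * t) * (t * t) = y * y := by rw [ht2, hs0, hyd]
    exact mul_self_eq_mul_self_iff.mp this
  rcases hcases with hc1 | hc2
  · exact main 1 A.one_mem (by norm_num) (by rw [one_mul]; exact hc1)
  · exact main (-1) (A.neg_mem A.one_mem) (by norm_num)
      (by rw [neg_one_mul]; exact hc2)
end

section
/- If A is an additive subgroup of ℝ, p is a rational number, and A + p·A = ℝ, then A = ℝ. -/
theorem stmt_4 (A : AddSubgroup ℝ) (p : ℚ)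
    (h : {z : ℝ | ∃ a ∈ A, ∃ b ∈ A, z = a + (p : ℝ) * b} = Set.univ) :
    A = ⊤ := by
  ext y
  simp only [AddSubgroup.mem_top, iff_true]
  have hden : ((p.den : ℝ)) ≠ 0 := by
    exact_mod_cast p.den_ne_zero
  have hmem : (y / (p.den : ℝ)) ∈ {z : ℝ | ∃ a ∈ A, ∃ b ∈ A, z = a + (p : ℝ) * b} := by
    rw [h]; trivial
  obtain ⟨a, ha, b, hb, heq⟩ := hmem
  have key : y = (p.den : ℤ) • a + p.num • b := by
    have hp : (p : ℝ) = (p.num : ℝ) / (p.den : ℝ) := by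
      exact_mod_cast (Rat.num_div_den p).symm
    have : y = (p.den : ℝ) * (a + (p : ℝ) * b) := by
      rw [← heq]; field_simp
    rw [this, hp]
    field_simp
    simp only [zsmul_eq_mul, Int.cast_natCast]
  rw [key]
  exact A.add_mem (A.zsmul_mem ha _) (A.zsmul_mem hb _)
end

section
/- If A is an additive subgroup of ℝ, x ∈ ℝ, and A + x·A = ℝ, then for every positive integer m, A + (m·x)·A = ℝ. -/
theorem stmt_8 (A : AddSubgroup ℝ) (x : ℝ)
    (h : {z : ℝ | ∃ a ∈ A, ∃ b ∈ A, z = a + x * b} = Set.univ)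
    (m : ℕ) (hm : 0 < m) :
    {z : ℝ | ∃ a ∈ A, ∃ b ∈ A, z = a + ((m : ℝ) * x) * b} = Set.univ := by
  ext z
  simp only [Set.mem_setOf_eq, Set.mem_univ, iff_true]
  have hz : z / (m : ℝ) ∈ {z : ℝ | ∃ a ∈ A, ∃ b ∈ A, z = a + x * b} := by
    rw [h]; trivial
  obtain ⟨a, ha, b, hb, heq⟩ := hz
  refine ⟨(m : ℝ) * a, ?_, b, hb, ?_⟩
  · have := A.nsmul_mem ha m
    simpa [nsmul_eq_mul] using this
  · have hm' : (m : ℝ) ≠ 0 := by positivity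
    field_simp at heq
    rw [heq]; ring
end

section
/- If A is an additive subgroup of ℝ, x ∈ ℝ, and A + x·A = ℝ, then for every rational number q, A + (x + q)·A = ℝ. -/
theorem stmt_9 (A : AddSubgroup ℝ) (x : ℝ)
    (h : {z : ℝ | ∃ a ∈ A, ∃ b ∈ A, z = a + x * b} = Set.univ)
    (q : ℚ) :
    {z : ℝ | ∃ a ∈ A, ∃ b ∈ A, z = a + (x + (q : ℝ)) * b} = Set.univ := by
  ext z
  simp only [Set.mem_setOf_eq, Set.mem_univ, iff_true]
  have hz : z / (q.den : ℝ) ∈ {z : ℝ | ∃ a ∈ A, ∃ b ∈ A, z = a + x * b} := by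
    rw [h]; trivial
  obtain ⟨a, ha, b, hb, hab⟩ := hz
  have hden : (q.den : ℝ) ≠ 0 := by positivity
  have hq : (q : ℝ) * (q.den : ℝ) = (q.num : ℝ) := by exact_mod_cast q.mul_den_eq_num
  have hz' : z = (q.den : ℝ) * a + x * ((q.den : ℝ) * b) := by
    field_simp at hab; linarith [hab]
  refine ⟨(q.den : ℤ) • a - q.num • b, sub_mem (A.zsmul_mem ha _) (A.zsmul_mem hb _),
    (q.den : ℤ) • b, A.zsmul_mem hb _, ?_⟩
  push_cast [zsmul_eq_mul]
  linear_combination hz' - b * hq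
end

section
/- There exists an F_σ additive subgroup A of ℝ and a real number x such that A has Lebesgue measure zero and A + x·A = ℝ. -/
open Set MeasureTheory Filter Finset
open scoped ENNReal

noncomputable section
namespace Stmt11

abbrev TT := AddCircle (1:ℝ)

lemma norm_coe_le_abs (s : ℝ) : ‖(s : TT)‖ ≤ |s| := by
  simpa using QuotientAddGroup.norm_mk_le_norm (S := AddSubgroup.zmultiples (1:ℝ)) (m := s)

lemma coe_int_zero (n : ℤ) : ((n : ℝ) : TT) = 0 := by
  rw [AddCircle.coe_eq_zero_iff]; exact ⟨n, by simp⟩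

lemma coe_sub_int (t : ℝ) (n : ℤ) : (t : TT) = ((t - n : ℝ) : TT) := by
  have h : ((t - n : ℝ) : TT) + (((n:ℝ)) : TT) = (t : TT) := by
    rw [show ((t - n : ℝ) : TT) + (((n:ℝ)) : TT) = (((t - n) + n : ℝ) : TT) from rfl]
    norm_num
  rw [← h, coe_int_zero, add_zero]

lemma norm_coe_le_of_int (t : ℝ) (n : ℤ) : ‖(t : TT)‖ ≤ |t - n| := by
  rw [coe_sub_int t n]; exact norm_coe_le_abs _

lemma norm_coe_le_half (t : ℝ) : ‖(t : TT)‖ ≤ 1/2 := by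
  simpa using AddCircle.norm_le_half_period (p := (1:ℝ)) (x := (t:TT)) one_ne_zero

/-- scales -/
def M : ℕ → ℕ
  | 0 => 0
  | k+1 => M k + k + 4^(k+1) + 2

lemma M_succ (k : ℕ) : M (k+1) = M k + k + 4^(k+1) + 2 := rfl

lemma M_mono : Monotone M := by
  apply monotone_nat_of_le_succ
  intro k; rw [M_succ]
  have := Nat.zero_le (4^(k+1)); omega

/-- the closed pieces -/
def fC (C : ℕ) : Set ℝ := {y | ∀ k : ℕ, ‖(((2:ℝ)^(M k) * y : ℝ) : TT)‖ ≤ C * (1/2:ℝ)^k}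

def Acar : Set ℝ := {y | ∃ C : ℕ, y ∈ fC C}

lemma fC_closed (C : ℕ) : IsClosed (fC C) := by
  have : fC C = ⋂ k : ℕ, (fun y : ℝ => ‖(((2:ℝ)^(M k) * y : ℝ) : TT)‖) ⁻¹' (Iic ((C:ℝ) * (1/2:ℝ)^k)) := by
    ext y; simp [fC]
  rw [this]
  refine isClosed_iInter fun k => IsClosed.preimage ?_ isClosed_Iic
  exact (continuous_norm.comp ((AddCircle.continuous_mk' 1).comp (continuous_const.mul continuous_id)))

def A : AddSubgroup ℝ where
  carrier := Acar
  zero_mem' := ⟨0, fun k => by simp⟩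
  add_mem' := by
    rintro a b ⟨C, hC⟩ ⟨D, hD⟩
    refine ⟨C + D, fun k => ?_⟩
    have e : ((2:ℝ)^(M k) * (a + b) : ℝ) = (2:ℝ)^(M k)*a + (2:ℝ)^(M k)*b := by ring
    rw [e]
    calc ‖(((2:ℝ)^(M k)*a + (2:ℝ)^(M k)*b : ℝ) : TT)‖
        = ‖(((2:ℝ)^(M k)*a : ℝ) : TT) + (((2:ℝ)^(M k)*b : ℝ) : TT)‖ := rfl
      _ ≤ ‖(((2:ℝ)^(M k)*a : ℝ) : TT)‖ + ‖(((2:ℝ)^(M k)*b : ℝ) : TT)‖ := norm_add_le _ _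
      _ ≤ C * (1/2:ℝ)^k + D * (1/2:ℝ)^k := add_le_add (hC k) (hD k)
      _ = ((C + D : ℕ) : ℝ) * (1/2:ℝ)^k := by push_cast; ring
  neg_mem' := by
    rintro a ⟨C, hC⟩
    refine ⟨C, fun k => ?_⟩
    have e : ((2:ℝ)^(M k) * (-a) : ℝ) = -((2:ℝ)^(M k)*a) := by ring
    rw [e]
    calc ‖((-((2:ℝ)^(M k)*a) : ℝ) : TT)‖ = ‖-(((2:ℝ)^(M k)*a : ℝ) : TT)‖ := rfl
      _ = ‖(((2:ℝ)^(M k)*a : ℝ) : TT)‖ := norm_neg _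
      _ ≤ _ := hC k

lemma A_carrier : (A : Set ℝ) = ⋃ C : ℕ, fC C := by
  ext y; simp [A, Acar, mem_iUnion]

/-! ### Measure zero -/

lemma cover_lemma (q : ℕ) (hq : 1 ≤ q) (ε : ℝ) (S : Set ℝ)
    (hS : ∀ y ∈ S, ‖(((q:ℝ)*y : ℝ) : TT)‖ ≤ ε) (n : ℤ) :
    S ∩ Ico (n:ℝ) (n+1) ⊆
      ⋃ i ∈ Finset.range (q+1),
        Icc (((((q:ℤ)*n + i : ℤ) : ℝ) - ε)/(q:ℝ)) (((((q:ℤ)*n + i : ℤ) : ℝ) + ε)/(q:ℝ)) := by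
  rintro y ⟨hy, hy0, hy1⟩
  have hqR : (0:ℝ) < (q:ℝ) := by positivity
  obtain ⟨r, hr⟩ : ∃ r : ℤ, r = round ((q:ℝ)*y) := ⟨_, rfl⟩
  have hnorm : ‖(((q:ℝ)*y : ℝ) : TT)‖ = |(q:ℝ)*y - r| := by
    rw [hr]; exact UnitAddCircle.norm_eq
  have hhalf : |(q:ℝ)*y - r| ≤ 1/2 := by
    rw [hr]; exact abs_sub_round _
  have hqy0 : (q:ℝ)*(n:ℝ) ≤ (q:ℝ)*y := mul_le_mul_of_nonneg_left hy0 hqR.le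
  have hqy1 : (q:ℝ)*y < (q:ℝ)*(n:ℝ) + q := by
    have := mul_lt_mul_of_pos_left hy1 hqR
    rw [mul_add, mul_one] at this; linarith
  obtain ⟨hh1, hh2⟩ := abs_le.1 hhalf
  have hr0 : (q:ℤ)*n ≤ r := by
    have h : ((q:ℤ)*n : ℝ) < (r:ℝ) + 1 := by push_cast; linarith
    have h2 : ((q:ℤ)*n : ℝ) < ((r + 1 : ℤ) : ℝ) := by push_cast at h ⊢; linarith
    exact Int.lt_add_one_iff.mp (by exact_mod_cast h2)
  have hr1 : r ≤ (q:ℤ)*n + q := by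
    have h : (r:ℝ) < (((q:ℤ)*n + q + 1 : ℤ) : ℝ) := by push_cast; linarith
    exact Int.lt_add_one_iff.mp (by exact_mod_cast h)
  have hnb : |(q:ℝ)*y - r| ≤ ε := hnorm ▸ hS y hy
  obtain ⟨hb1, hb2⟩ := abs_le.1 hnb
  obtain ⟨i, hi⟩ : ∃ i : ℕ, i = (r - (q:ℤ)*n).toNat := ⟨_, rfl⟩
  have hieq : ((q:ℤ)*n + i : ℤ) = r := by
    rw [hi, Int.toNat_of_nonneg (by omega)]; ring
  refine mem_iUnion.2 ⟨i, mem_iUnion.2 ⟨?_, ?_, ?_⟩⟩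
  · rw [Finset.mem_range]; omega
  · rw [div_le_iff₀ hqR, hieq]
    push_cast
    linarith
  · rw [le_div_iff₀ hqR, hieq]
    push_cast
    linarith

lemma vol_lemma (q : ℕ) (hq : 1 ≤ q) (ε : ℝ) (hε : 0 ≤ ε) (S : Set ℝ)
    (hS : ∀ y ∈ S, ‖(((q:ℝ)*y : ℝ) : TT)‖ ≤ ε) (n : ℤ) :
    volume (S ∩ Ico (n:ℝ) (n+1)) ≤ ENNReal.ofReal (4*ε) := by
  have hqR : (0:ℝ) < (q:ℝ) := by positivity
  calc volume (S ∩ Ico (n:ℝ) (n+1))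
      ≤ volume (⋃ i ∈ Finset.range (q+1),
          Icc (((((q:ℤ)*n + i : ℤ) : ℝ) - ε)/(q:ℝ)) (((((q:ℤ)*n + i : ℤ) : ℝ) + ε)/(q:ℝ))) :=
        measure_mono (cover_lemma q hq ε S hS n)
    _ ≤ ∑ i ∈ Finset.range (q+1),
          volume (Icc (((((q:ℤ)*n + i : ℤ) : ℝ) - ε)/(q:ℝ)) (((((q:ℤ)*n + i : ℤ) : ℝ) + ε)/(q:ℝ))) :=
        measure_biUnion_finset_le _ _
    _ = ∑ i ∈ Finset.range (q+1), ENNReal.ofReal (2*ε/q) := by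
        refine Finset.sum_congr rfl fun i _ => ?_
        rw [Real.volume_Icc]
        congr 1; field_simp; ring
    _ = ((q+1 : ℕ):ℝ≥0∞) * ENNReal.ofReal (2*ε/q) := by
        rw [Finset.sum_const, Finset.card_range, nsmul_eq_mul]
    _ = ENNReal.ofReal ((q+1 : ℕ) * (2*ε/q)) := by
        rw [ENNReal.ofReal_mul (by positivity), ENNReal.ofReal_natCast]
    _ ≤ ENNReal.ofReal (4*ε) := by
        apply ENNReal.ofReal_le_ofReal
        have h2q : ((q+1:ℕ):ℝ) ≤ 2*q := by
          push_cast
          have : (1:ℝ) ≤ q := by exact_mod_cast hq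
          linarith
        calc ((q+1:ℕ):ℝ) * (2*ε/q) ≤ (2*(q:ℝ)) * (2*ε/q) :=
              mul_le_mul_of_nonneg_right h2q (by positivity)
          _ = 4 * ε := by field_simp; ring

lemma fC_inter_null (C : ℕ) (n : ℤ) : volume (fC C ∩ Ico (n:ℝ) (n+1)) = 0 := by
  have key : ∀ k : ℕ, volume (fC C ∩ Ico (n:ℝ) (n+1)) ≤ ENNReal.ofReal (4 * (C * (1/2:ℝ)^k)) := by
    intro k
    refine vol_lemma (2^(M k)) Nat.one_le_two_pow (C * (1/2:ℝ)^k) (by positivity) _ ?_ n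
    intro y hy
    have := hy k
    have hcast : ((2^(M k) : ℕ) : ℝ) = (2:ℝ)^(M k) := by push_cast; ring
    rw [hcast]
    exact this
  have htend : Tendsto (fun k : ℕ => ENNReal.ofReal (4 * ((C:ℝ) * (1/2:ℝ)^k))) atTop (nhds 0) := by
    have h1 : Tendsto (fun k : ℕ => 4 * ((C:ℝ) * (1/2:ℝ)^k)) atTop (nhds 0) := by
      have := tendsto_pow_atTop_nhds_zero_of_lt_one (by norm_num : (0:ℝ) ≤ 1/2) (by norm_num : (1/2:ℝ) < 1)
      have h2 := this.const_mul (4 * (C:ℝ))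
      simp only [mul_zero] at h2
      convert h2 using 2 with k
      ring
    have := (ENNReal.continuous_ofReal.tendsto 0).comp h1
    rw [ENNReal.ofReal_zero] at this; exact this
  exact le_zero_iff.mp (ge_of_tendsto' htend key)

lemma fC_null (C : ℕ) : volume (fC C) = 0 := by
  have hcov : fC C ⊆ ⋃ n : ℤ, (fC C ∩ Ico (n:ℝ) (n+1)) := by
    intro y hy
    have hu : y ∈ ⋃ n : ℤ, Ico (n:ℝ) (n+1) := by
      rw [iUnion_Ico_intCast]; trivial
    rcases mem_iUnion.1 hu with ⟨n, hn⟩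
    exact mem_iUnion.2 ⟨n, hy, hn⟩
  refine le_antisymm ?_ zero_le
  calc volume (fC C) ≤ volume (⋃ n : ℤ, (fC C ∩ Ico (n:ℝ) (n+1))) := measure_mono hcov
    _ = 0 := measure_iUnion_null (fun n => fC_inter_null C n)

lemma A_null : volume (A : Set ℝ) = 0 := by
  rw [A_carrier]
  exact measure_iUnion_null (fun C => fC_null C)

/-! ### The number x and its approximations -/

lemma pow_aux (j i : ℕ) : 4^(j+1) + i ≤ 4^(i + (j+1)) := by
  induction i with
  | zero => simp
  | succ i ih =>
    have h1 : 1 ≤ 4^(i + (j+1)) := Nat.one_le_two_pow.trans (Nat.pow_le_pow_left (by norm_num) _)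
    calc 4^(j+1) + (i+1) ≤ 4^(i+(j+1)) + 1 := by omega
      _ ≤ 4 * 4^(i+(j+1)) := by omega
      _ = 4^(i+1+(j+1)) := by rw [← pow_succ']; ring_nf

lemma summable_half (s : ℕ → ℕ) (hs : ∀ j, j ≤ s j) :
    Summable fun j : ℕ => (1/2:ℝ)^(s j) :=
  Summable.of_nonneg_of_le (fun j => by positivity)
    (fun j => pow_le_pow_of_le_one (by norm_num) (by norm_num) (hs j)) summable_geometric_two

lemma tsum_half_le (s : ℕ → ℕ) (a : ℕ) (hs : ∀ j, a + j ≤ s j) :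
    ∑' j : ℕ, (1/2:ℝ)^(s j) ≤ (1/2:ℝ)^a * 2 := by
  have hsum : Summable fun j : ℕ => (1/2:ℝ)^(s j) :=
    summable_half s (fun j => le_trans (by omega) (hs j))
  have h2 : Summable fun j : ℕ => (1/2:ℝ)^(a+j) := by
    simp only [pow_add]
    exact summable_geometric_two.mul_left _
  calc ∑' j : ℕ, (1/2:ℝ)^(s j) ≤ ∑' j : ℕ, (1/2:ℝ)^(a+j) :=
        Summable.tsum_le_tsum (fun j => pow_le_pow_of_le_one (by norm_num) (by norm_num) (hs j)) hsum h2
    _ = (1/2:ℝ)^a * ∑' j : ℕ, (1/2:ℝ)^j := by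
        simp only [pow_add]; rw [tsum_mul_left]
    _ = (1/2:ℝ)^a * 2 := by rw [tsum_geometric_two]

def x : ℝ := ∑' j : ℕ, (1/2:ℝ)^(4^j)

lemma x_summable : Summable fun j : ℕ => (1/2:ℝ)^(4^j) :=
  summable_half _ (fun j => (Nat.lt_pow_self (n := j) (by norm_num)).le)

def tail (j : ℕ) : ℝ := ∑' i : ℕ, (1/2:ℝ)^(4^(i + (j+1)))

lemma tail_summable (j : ℕ) : Summable fun i : ℕ => (1/2:ℝ)^(4^(i + (j+1))) :=
  summable_half _ (fun i => le_trans (Nat.le_add_left i _) (pow_aux j i))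

lemma x_split (j : ℕ) : x = ∑ i ∈ Finset.range (j+1), (1/2:ℝ)^(4^i) + tail j :=
  (Summable.sum_add_tsum_nat_add (j+1) x_summable).symm

lemma tail_ge (j : ℕ) : (1/2:ℝ)^(4^(j+1)) ≤ tail j := by
  have h := Summable.le_tsum (tail_summable j) 0 (fun i _ => by positivity)
  rw [tail]
  simpa using h

lemma tail_pos (j : ℕ) : 0 < tail j :=
  lt_of_lt_of_le (by positivity) (tail_ge j)

lemma tail_le (j : ℕ) : tail j ≤ (1/2:ℝ)^(4^(j+1)) * 2 :=
  tsum_half_le _ (4^(j+1)) (fun i => pow_aux j i)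

lemma two_pow_mul_half (a b : ℕ) (h : a ≤ b) : (2:ℝ)^a * (1/2:ℝ)^b = (1/2:ℝ)^(b-a) := by
  obtain ⟨c, rfl⟩ : ∃ c, b = c + a := ⟨b - a, by omega⟩
  rw [Nat.add_sub_cancel, pow_add]
  rw [show (2:ℝ)^a * ((1/2:ℝ)^c * (1/2:ℝ)^a) = (1/2:ℝ)^c * ((2:ℝ)^a * (1/2:ℝ)^a) from by ring,
    ← mul_pow]
  norm_num

lemma two_pow_mul_half' (a b : ℕ) (h : b ≤ a) : (2:ℝ)^a * (1/2:ℝ)^b = (2:ℝ)^(a-b) := by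
  obtain ⟨c, rfl⟩ : ∃ c, a = c + b := ⟨a - b, by omega⟩
  rw [Nat.add_sub_cancel, pow_add]
  rw [show (2:ℝ)^c * (2:ℝ)^b * (1/2:ℝ)^b = (2:ℝ)^c * ((2:ℝ)^b * (1/2:ℝ)^b) from by ring,
    ← mul_pow]
  norm_num

def P (j : ℕ) : ℕ := ∑ i ∈ Finset.range (j+1), 2^(4^j - 4^i)

def eps (j : ℕ) : ℝ := 2^(4^j) * tail j

lemma key_x (j : ℕ) : (2:ℝ)^(4^j) * x = (P j : ℝ) + eps j := by
  rw [x_split j, mul_add, eps]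
  congr 1
  rw [P, Finset.mul_sum]
  push_cast
  refine Finset.sum_congr rfl fun i hi => ?_
  have hle : 4^i ≤ 4^j := Nat.pow_le_pow_right (by norm_num) (by
    have := Finset.mem_range.1 hi; omega)
  rw [two_pow_mul_half' _ _ hle]

lemma eps_pos (j : ℕ) : 0 < eps j := by
  have := tail_pos j
  rw [eps]; positivity

lemma four_le (j : ℕ) : 4^j ≤ 4^(j+1) := Nat.pow_le_pow_right (by norm_num) (by omega)

lemma eps_ge (j : ℕ) : (1/2:ℝ)^(4^(j+1) - 4^j) ≤ eps j := by
  rw [eps, ← two_pow_mul_half _ _ (four_le j)]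
  exact mul_le_mul_of_nonneg_left (tail_ge j) (by positivity)

lemma eps_le (j : ℕ) : eps j ≤ (1/2:ℝ)^(4^(j+1) - 4^j) * 2 := by
  rw [eps, ← two_pow_mul_half _ _ (four_le j)]
  calc (2:ℝ)^(4^j) * tail j ≤ (2:ℝ)^(4^j) * ((1/2:ℝ)^(4^(j+1)) * 2) :=
        mul_le_mul_of_nonneg_left (tail_le j) (by positivity)
    _ = (2:ℝ)^(4^j) * (1/2:ℝ)^(4^(j+1)) * 2 := by ring

lemma ej_ge (j : ℕ) : j + 3 ≤ 4^(j+1) - 4^j := by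
  have h1 : j < 4^j := Nat.lt_pow_self (n := j) (by norm_num)
  have h2 : 4^(j+1) = 4 * 4^j := by rw [pow_succ]; ring
  omega

lemma x_pos : 0 < x :=
  lt_of_lt_of_le (by positivity : (0:ℝ) < (1/2:ℝ)^(4^0))
    (Summable.le_tsum x_summable 0 (fun i _ => by positivity))

lemma x_le_one : x ≤ 1 := by
  have h := tail_le 0
  rw [x_split 0]
  norm_num at h ⊢
  linarith

/-! ### The greedy recursion -/

variable (z : ℝ)

def dstep (j : ℕ) (y : ℝ) : ℤ := ⌊Int.fract ((2:ℝ)^(M (j+1)) * (z - x * y)) / eps j⌋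

def cstep (j : ℕ) (y : ℝ) : ℤ := dstep z j y * 2^(4^j)

def F : ℕ → ℝ
  | 0 => 0
  | j+1 => F j + (cstep z j (F j) : ℝ) * (1/2:ℝ)^(M (j+1))

def g (j : ℕ) : ℝ := (cstep z j (F z j) : ℝ) * (1/2:ℝ)^(M (j+1))

lemma F_eq_sum (n : ℕ) : F z n = ∑ j ∈ Finset.range n, g z j := by
  induction n with
  | zero => simp [F]
  | succ n ih => rw [Finset.sum_range_succ, ← ih]; rfl

lemma dstep_nonneg (j : ℕ) (y : ℝ) : 0 ≤ dstep z j y :=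
  Int.floor_nonneg.2 (div_nonneg (Int.fract_nonneg _) (eps_pos j).le)

lemma dstep_le (j : ℕ) (y : ℝ) : (dstep z j y : ℝ) ≤ (2:ℝ)^(4^(j+1) - 4^j) := by
  have hepos := eps_pos j
  have h1 : (dstep z j y : ℝ) ≤ Int.fract ((2:ℝ)^(M (j+1)) * (z - x * y)) / eps j :=
    Int.floor_le _
  have h2 : Int.fract ((2:ℝ)^(M (j+1)) * (z - x * y)) / eps j ≤ 1 / eps j := by
    gcongr
    exact (Int.fract_lt_one _).le
  have h3 : 1 / eps j ≤ (2:ℝ)^(4^(j+1) - 4^j) := by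
    rw [div_le_iff₀ hepos]
    calc (1:ℝ) = (2:ℝ)^(4^(j+1) - 4^j) * (1/2:ℝ)^(4^(j+1) - 4^j) := by
          rw [← mul_pow]; norm_num
      _ ≤ (2:ℝ)^(4^(j+1) - 4^j) * eps j :=
          mul_le_mul_of_nonneg_left (eps_ge j) (by positivity)
  linarith

lemma cstep_nonneg (j : ℕ) (y : ℝ) : (0:ℝ) ≤ (cstep z j y : ℝ) := by
  have h := dstep_nonneg z j y
  have h' : (0:ℝ) ≤ (dstep z j y : ℝ) := by exact_mod_cast h
  have hc : (cstep z j y : ℝ) = (dstep z j y : ℝ) * (2:ℝ)^(4^j) := by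
    rw [cstep]; push_cast; ring
  rw [hc]
  exact mul_nonneg h' (by positivity)

lemma cstep_le (j : ℕ) (y : ℝ) : (cstep z j y : ℝ) ≤ (2:ℝ)^(4^(j+1)) := by
  have hc : (cstep z j y : ℝ) = (dstep z j y : ℝ) * (2:ℝ)^(4^j) := by
    rw [cstep]; push_cast; ring
  rw [hc]
  calc (dstep z j y : ℝ) * (2:ℝ)^(4^j) ≤ (2:ℝ)^(4^(j+1) - 4^j) * (2:ℝ)^(4^j) :=
        mul_le_mul_of_nonneg_right (dstep_le z j y) (by positivity)
    _ = (2:ℝ)^(4^(j+1) - 4^j + 4^j) := by rw [← pow_add]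
    _ = (2:ℝ)^(4^(j+1)) := by rw [Nat.sub_add_cancel (four_le j)]

lemma g_nonneg (j : ℕ) : 0 ≤ g z j := by
  rw [g]
  exact mul_nonneg (cstep_nonneg z j _) (by positivity)

lemma g_le (j : ℕ) : g z j ≤ (1/2:ℝ)^(M j + j + 2) := by
  have h4M : 4^(j+1) ≤ M (j+1) := by rw [M_succ]; omega
  have hMe : M (j+1) - 4^(j+1) = M j + j + 2 := by rw [M_succ]; omega
  rw [g]
  calc (cstep z j (F z j) : ℝ) * (1/2:ℝ)^(M (j+1))
      ≤ (2:ℝ)^(4^(j+1)) * (1/2:ℝ)^(M (j+1)) :=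
        mul_le_mul_of_nonneg_right (cstep_le z j _) (by positivity)
    _ = (1/2:ℝ)^(M (j+1) - 4^(j+1)) := two_pow_mul_half _ _ h4M
    _ = (1/2:ℝ)^(M j + j + 2) := by rw [hMe]

lemma g_summable : Summable (g z) :=
  Summable.of_nonneg_of_le (g_nonneg z)
    (fun j => (g_le z j).trans (pow_le_pow_of_le_one (by norm_num) (by norm_num) (by omega)))
    summable_geometric_two

lemma accuracy (j : ℕ) (y : ℝ) :
    ∃ n : ℤ, |(2:ℝ)^(M (j+1)) * (z - x * y) - x * (cstep z j y : ℝ) - (n:ℝ)| ≤ eps j := by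
  have hepos := eps_pos j
  set t := (2:ℝ)^(M (j+1)) * (z - x * y) with ht
  set d := dstep z j y with hd
  refine ⟨⌊t⌋ - d * (P j : ℤ), ?_⟩
  have hxc : x * (cstep z j y : ℝ) = (d:ℝ) * ((P j : ℝ) + eps j) := by
    rw [cstep, ← hd]
    push_cast
    rw [show x * ((d:ℝ) * (2:ℝ)^(4^j)) = (d:ℝ) * ((2:ℝ)^(4^j) * x) from by ring, key_x]
  rw [hxc]
  have hsimp : t - (d:ℝ) * ((P j : ℝ) + eps j) - ((⌊t⌋ - d * (P j : ℤ) : ℤ) : ℝ)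
      = Int.fract t - (d:ℝ) * eps j := by
    rw [Int.fract]
    push_cast
    ring
  rw [hsimp]
  have hfl1 : (d:ℝ) ≤ Int.fract t / eps j := by
    rw [hd, dstep, ← ht]
    exact Int.floor_le _
  have hfl2 : Int.fract t / eps j < (d:ℝ) + 1 := by
    rw [hd, dstep, ← ht]
    push_cast
    exact Int.lt_floor_add_one _
  have h1 : (d:ℝ) * eps j ≤ Int.fract t := by
    have := mul_le_mul_of_nonneg_right hfl1 hepos.le
    rwa [div_mul_cancel₀ _ hepos.ne'] at this
  have h2 : Int.fract t < ((d:ℝ) + 1) * eps j := by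
    have := mul_lt_mul_of_pos_right hfl2 hepos
    rwa [div_mul_cancel₀ _ hepos.ne'] at this
  rw [abs_le]
  constructor <;> nlinarith

def b : ℝ := ∑' j : ℕ, g z j

lemma tail_bound (k : ℕ) :
    0 ≤ b z - F z k ∧ b z - F z k ≤ (1/2:ℝ)^(M k + k + 1) := by
  have hsplit := Summable.sum_add_tsum_nat_add k (g_summable z)
  have hb : b z - F z k = ∑' j : ℕ, g z (j + k) := by
    rw [b, F_eq_sum, ← hsplit]; ring
  have hsumtail : Summable fun j : ℕ => g z (j + k) :=
    (summable_nat_add_iff k).2 (g_summable z)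
  constructor
  · rw [hb]
    exact tsum_nonneg (fun j => g_nonneg z _)
  · rw [hb]
    have hbound : ∑' j : ℕ, g z (j + k) ≤ ∑' j : ℕ, (1/2:ℝ)^(M (j+k) + (j+k) + 2) :=
      Summable.tsum_le_tsum (fun j => g_le z _) hsumtail
        (summable_half _ (fun j => by
          have := M_mono (Nat.le_add_left k j); omega))
    have hbound2 : ∑' j : ℕ, (1/2:ℝ)^(M (j+k) + (j+k) + 2) ≤ (1/2:ℝ)^(M k + k + 2) * 2 :=
      tsum_half_le _ (M k + k + 2) (fun j => by
        have := M_mono (Nat.le_add_left k j); omega)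
    have heq : (1/2:ℝ)^(M k + k + 2) * 2 = (1/2:ℝ)^(M k + k + 1) := by
      rw [show M k + k + 2 = (M k + k + 1) + 1 from rfl, pow_succ]
      ring
    linarith

lemma b_mem : b z ∈ A := by
  refine ⟨1, fun k => ?_⟩
  obtain ⟨ht0, ht1⟩ := tail_bound z k
  have hN : ∃ N : ℤ, (2:ℝ)^(M k) * F z k = (N : ℝ) := by
    refine ⟨∑ j ∈ Finset.range k, cstep z j (F z j) * 2^(M k - M (j+1)), ?_⟩
    rw [F_eq_sum, Finset.mul_sum]
    push_cast
    refine Finset.sum_congr rfl fun j hj => ?_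
    have hle : M (j+1) ≤ M k := M_mono (Finset.mem_range.1 hj)
    rw [g, show (2:ℝ)^(M k) * ((cstep z j (F z j) : ℝ) * (1/2:ℝ)^(M (j+1)))
        = (cstep z j (F z j) : ℝ) * ((2:ℝ)^(M k) * (1/2:ℝ)^(M (j+1))) from by ring,
      two_pow_mul_half' _ _ hle]
  obtain ⟨N, hNe⟩ := hN
  calc ‖(((2:ℝ)^(M k) * b z : ℝ) : TT)‖ ≤ |(2:ℝ)^(M k) * b z - (N:ℝ)| :=
        norm_coe_le_of_int _ N
    _ = (2:ℝ)^(M k) * (b z - F z k) := by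
        rw [← hNe, ← mul_sub]
        rw [abs_of_nonneg (by positivity)]
    _ ≤ (2:ℝ)^(M k) * (1/2:ℝ)^(M k + k + 1) :=
        mul_le_mul_of_nonneg_left ht1 (by positivity)
    _ = (1/2:ℝ)^(k+1) := by
        rw [two_pow_mul_half _ _ (by omega), show M k + k + 1 - M k = k + 1 from by omega]
    _ ≤ 1 * (1/2:ℝ)^k := by
        rw [pow_succ, one_mul]
        nlinarith [pow_nonneg (by norm_num : (0:ℝ) ≤ 1/2) k]
    _ = ((1:ℕ):ℝ) * (1/2:ℝ)^k := by norm_num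

lemma a_mem : z - x * b z ∈ A := by
  refine ⟨2, fun k => ?_⟩
  match k with
  | 0 =>
    calc ‖(((2:ℝ)^(M 0) * (z - x * b z) : ℝ) : TT)‖ ≤ 1/2 := norm_coe_le_half _
      _ ≤ 2 * (1/2:ℝ)^0 := by norm_num
  | (j+1) =>
    obtain ⟨n, hn⟩ := accuracy z j (F z j)
    obtain ⟨ht0, ht1⟩ := tail_bound z (j+1)
    have hpow : (2:ℝ)^(M (j+1)) * (1/2:ℝ)^(M (j+1)) = 1 := by
      rw [← mul_pow]; norm_num
    have hiden : (2:ℝ)^(M (j+1)) * (z - x * b z)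
        = ((2:ℝ)^(M (j+1)) * (z - x * F z j) - x * (cstep z j (F z j) : ℝ))
          - (2:ℝ)^(M (j+1)) * x * (b z - F z (j+1)) := by
      have hF : F z (j+1) = F z j + (cstep z j (F z j) : ℝ) * (1/2:ℝ)^(M (j+1)) := rfl
      rw [hF]
      linear_combination (-(x * (cstep z j (F z j) : ℝ))) * hpow
    have herr : (2:ℝ)^(M (j+1)) * x * (b z - F z (j+1)) ≤ (1/2:ℝ)^(j+2) := by
      calc (2:ℝ)^(M (j+1)) * x * (b z - F z (j+1))
          ≤ (2:ℝ)^(M (j+1)) * 1 * (1/2:ℝ)^(M (j+1) + (j+1) + 1) := by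
            apply mul_le_mul
            · exact mul_le_mul_of_nonneg_left x_le_one (by positivity)
            · exact ht1
            · exact ht0
            · positivity
        _ = (1/2:ℝ)^(j+2) := by
            rw [mul_one, two_pow_mul_half _ _ (by omega),
              show M (j+1) + (j+1) + 1 - M (j+1) = j + 2 from by omega]
    have herr0 : 0 ≤ (2:ℝ)^(M (j+1)) * x * (b z - F z (j+1)) := by
      have := x_pos
      positivity
    have heps : eps j ≤ (1/2:ℝ)^(j+2) := by
      calc eps j ≤ (1/2:ℝ)^(4^(j+1) - 4^j) * 2 := eps_le j
        _ ≤ (1/2:ℝ)^(j+3) * 2 := by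
            apply mul_le_mul_of_nonneg_right _ (by norm_num)
            exact pow_le_pow_of_le_one (by norm_num) (by norm_num) (ej_ge j)
        _ = (1/2:ℝ)^(j+2) := by rw [pow_succ]; ring
    calc ‖(((2:ℝ)^(M (j+1)) * (z - x * b z) : ℝ) : TT)‖
        ≤ |(2:ℝ)^(M (j+1)) * (z - x * b z) - (n:ℝ)| := norm_coe_le_of_int _ n
      _ ≤ (1/2:ℝ)^(j+2) + (1/2:ℝ)^(j+2) := by
          rw [hiden]
          have habs := abs_le.1 hn
          rw [abs_le]
          constructor
          · cases habs; linarith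
          · cases habs; linarith
      _ = (1/2:ℝ)^(j+1) := by rw [pow_succ]; ring
      _ ≤ 2 * (1/2:ℝ)^(j+1) := by nlinarith [pow_nonneg (by norm_num : (0:ℝ) ≤ 1/2) (j+1)]

end Stmt11

theorem stmt_11 :
    ∃ (A : AddSubgroup ℝ) (x : ℝ),
      (∃ f : ℕ → Set ℝ, (∀ n, IsClosed (f n)) ∧ (A : Set ℝ) = ⋃ n, f n) ∧
      MeasureTheory.volume (A : Set ℝ) = 0 ∧
      {z : ℝ | ∃ a ∈ A, ∃ b ∈ A, z = a + x * b} = Set.univ := by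
  refine ⟨Stmt11.A, Stmt11.x, ⟨Stmt11.fC, Stmt11.fC_closed, Stmt11.A_carrier⟩, Stmt11.A_null, ?_⟩
  ext z
  simp only [Set.mem_setOf_eq, Set.mem_univ, iff_true]
  exact ⟨z - Stmt11.x * Stmt11.b z, Stmt11.a_mem z, Stmt11.b z, Stmt11.b_mem z, by ring⟩
end
end

section
/- Let A be an additive subgroup of ℝ and x ∈ ℝ with A + x·A = ℝ. Then for any subring R of ℝ containing A, R = ℝ. -/
/-- Auxiliary: if every real is `r + s*y` with `r,s ∈ R`, `y*y = d ∈ R` with `d > 0`,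
and the only `s ∈ R` with `s*y ∈ R` is `0`, we get a contradiction
(by considering square roots of `±y`). -/
lemma stmt_13_aux (R : Subring ℝ) (y d : ℝ)
    (hdR : d ∈ R) (hd0 : 0 < d) (hy2 : y * y = d)
    (hdec : ∀ z : ℝ, ∃ r ∈ R, ∃ s ∈ R, z = r + s * y)
    (hkey : ∀ s ∈ R, s * y ∈ R → s = 0) : False := by
  have hy0 : y ≠ 0 := by
    intro h0
    rw [h0] at hy2
    nlinarith
  have main : ∀ e : ℝ, e ∈ R → e * e = 1 → 0 < e * y → False := by
    intro e heR he hey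
    obtain ⟨r, hr, c, hc, hs⟩ := hdec (Real.sqrt (e * y))
    have hs2 : Real.sqrt (e * y) * Real.sqrt (e * y) = e * y :=
      Real.mul_self_sqrt hey.le
    rw [hs] at hs2
    -- (r + c*y)^2 = e*y  and  y*y = d
    have heq : (e - 2 * (r * c)) * y = r * r + (c * c) * d := by
      linear_combination (c * c) * hy2 - hs2
    have h2R : (2 : ℝ) ∈ R := by rw [show (2:ℝ) = 1 + 1 by norm_num]; exact R.add_mem R.one_mem R.one_mem
    have hcoef : e - 2 * (r * c) ∈ R :=
      R.sub_mem heR (R.mul_mem h2R (R.mul_mem hr hc))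
    have hmem : (e - 2 * (r * c)) * y ∈ R := by
      rw [heq]
      exact R.add_mem (R.mul_mem hr hr) (R.mul_mem (R.mul_mem hc hc) hdR)
    have h0 : e - 2 * (r * c) = 0 := hkey _ hcoef hmem
    rw [h0, zero_mul] at heq
    nlinarith [mul_self_nonneg r, mul_self_nonneg c,
      mul_nonneg (mul_self_nonneg c) hd0.le, sq_nonneg (r * c), sq_nonneg (r + c),
      sq_nonneg (r - c)]
  rcases hy0.lt_or_gt with hneg | hpos
  · exact main (-1) (R.neg_mem R.one_mem) (by norm_num) (by nlinarith)
  · exact main 1 R.one_mem (by norm_num) (by nlinarith)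

theorem stmt_13 (A : AddSubgroup ℝ) (x : ℝ)
    (h : {z : ℝ | ∃ a ∈ A, ∃ b ∈ A, z = a + x * b} = Set.univ)
    (R : Subring ℝ) (hAR : (A : Set ℝ) ⊆ (R : Set ℝ)) :
    R = ⊤ := by
  have hdec : ∀ z : ℝ, ∃ r ∈ R, ∃ s ∈ R, z = r + s * x := by
    intro z
    have hz : z ∈ {z : ℝ | ∃ a ∈ A, ∃ b ∈ A, z = a + x * b} := by
      rw [h]; trivial
    obtain ⟨a, ha, b, hb, hzab⟩ := hz
    exact ⟨a, hAR ha, b, hAR hb, by linarith [hzab, mul_comm x b]⟩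
  by_cases hI : ∃ i : ℝ, i ∈ R ∧ i ≠ 0 ∧ i * x ∈ R
  · obtain ⟨i, hiR, hi0, hixR⟩ := hI
    ext z
    simp only [Subring.mem_top, iff_true]
    obtain ⟨r, hr, s, hs, hzd⟩ := hdec (z / i)
    have hz : z = i * r + s * (i * x) := by
      field_simp at hzd
      linarith [hzd]
    rw [hz]
    exact R.add_mem (R.mul_mem hiR hr) (R.mul_mem hs hixR)
  · exfalso
    push_neg at hI
    have key : ∀ s ∈ R, s * x ∈ R → s = 0 := by
      intro s hs hsx
      by_contra h0
      exact hI s hs h0 hsx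
    have hxR : x ∉ R := by
      intro hx
      have h1 := key 1 R.one_mem (by simpa using hx)
      norm_num at h1
    -- R is closed under inverses
    have hinv : ∀ r : ℝ, r ∈ R → r ≠ 0 → r⁻¹ ∈ R := by
      intro r hr hr0
      obtain ⟨c, hc, e, he, hre⟩ := hdec r⁻¹
      have h1 : (r * e) * x = 1 - r * c := by
        have : r * r⁻¹ = 1 := mul_inv_cancel₀ hr0
        rw [hre] at this
        linarith [this]
      have h2 : (r * e) * x ∈ R := by
        rw [h1]; exact R.sub_mem R.one_mem (R.mul_mem hr hc)
      have h3 : r * e = 0 := key _ (R.mul_mem hr he) h2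
      have h4 : e = 0 := by
        rcases mul_eq_zero.mp h3 with h | h
        · exact absurd h hr0
        · exact h
      rw [hre, h4]
      simpa using hc
    have h2R : (2 : ℝ) ∈ R := by rw [show (2:ℝ) = 1 + 1 by norm_num]; exact R.add_mem R.one_mem R.one_mem
    have h2inv : (2 : ℝ)⁻¹ ∈ R := hinv 2 h2R two_ne_zero
    have hb2 : ∀ β : ℝ, β ∈ R → β * 2⁻¹ ∈ R := fun β hβ => R.mul_mem hβ h2inv
    obtain ⟨α, hα, β, hβ, hx2⟩ := hdec (x * x)
    -- put y := x - β/2, d := α + (β/2)^2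
    have hy2 : (x - β * 2⁻¹) * (x - β * 2⁻¹) = α + (β * 2⁻¹) * (β * 2⁻¹) := by
      linear_combination hx2
    have hdR : α + (β * 2⁻¹) * (β * 2⁻¹) ∈ R :=
      R.add_mem hα (R.mul_mem (hb2 β hβ) (hb2 β hβ))
    have hyR : x - β * 2⁻¹ ∉ R := by
      intro hy
      apply hxR
      have hx' : x = (x - β * 2⁻¹) + β * 2⁻¹ := by ring
      rw [hx']
      exact R.add_mem hy (hb2 β hβ)
    have hy0 : x - β * 2⁻¹ ≠ 0 := by
      intro h0
      exact hyR (h0 ▸ R.zero_mem)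
    have hd0 : 0 < α + (β * 2⁻¹) * (β * 2⁻¹) := by
      rw [← hy2]
      exact lt_of_le_of_ne (mul_self_nonneg _) (Ne.symm (mul_ne_zero hy0 hy0))
    have hdec' : ∀ z : ℝ, ∃ r ∈ R, ∃ s ∈ R, z = r + s * (x - β * 2⁻¹) := by
      intro z
      obtain ⟨r, hr, s, hs, hz⟩ := hdec z
      refine ⟨r + s * (β * 2⁻¹), R.add_mem hr (R.mul_mem hs (hb2 β hβ)), s, hs, ?_⟩
      rw [hz]; ring
    have hkey' : ∀ s ∈ R, s * (x - β * 2⁻¹) ∈ R → s = 0 := by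
      intro s hs hsy
      apply key s hs
      have hx' : s * x = s * (x - β * 2⁻¹) + s * (β * 2⁻¹) := by ring
      rw [hx']
      exact R.add_mem hsy (R.mul_mem hs (hb2 β hβ))
    exact stmt_13_aux R (x - β * 2⁻¹) (α + (β * 2⁻¹) * (β * 2⁻¹)) hdR hd0 hy2 hdec' hkey'
end

section
/- If A is a subring of the field ℚ_p of p-adic numbers and there exists x ∈ ℚ_p such that A + x·A = ℚ_p, then A = ℚ_p. -/
open Padic Polynomial

variable {p : ℕ} [Fact p.Prime]

private lemma pval_neg (x : ℚ_[p]) : (-x).valuation = x.valuation := by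
  rcases eq_or_ne x 0 with rfl | hx
  · simp
  · have : (-x) = (-1 : ℚ_[p]) * x := by ring
    rw [this, Padic.valuation_mul (by norm_num) hx]
    have h2 := Padic.valuation_mul (x := (-1 : ℚ_[p])) (y := -1) (by norm_num) (by norm_num)
    norm_num at h2
    omega

private lemma pval_add_eq {x y : ℚ_[p]} (hx : x ≠ 0)
    (hv : x.valuation < y.valuation) :
    x + y ≠ 0 ∧ (x + y).valuation = x.valuation := by
  have hxy : x + y ≠ 0 := by
    intro h0
    have hye : y = -x := by linear_combination h0
    rw [hye, pval_neg] at hv; exact lt_irrefl _ hv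
  refine ⟨hxy, le_antisymm ?_ ?_⟩
  · have h2 : x = (x + y) + (-y) := by ring
    have := Padic.le_valuation_add (x := x + y) (y := -y) (by rw [← h2]; exact hx)
    rw [← h2, pval_neg] at this
    by_contra hlt
    push_neg at hlt
    have : min (x + y).valuation y.valuation ≤ x.valuation := this
    rcases min_le_iff.mp this with h | h <;> omega
  · have := Padic.le_valuation_add (x := x) (y := y) hxy
    rcases le_or_gt x.valuation y.valuation with h | h
    · simpa [min_eq_left h] using this
    · omega

private lemma exists_sqrt {u : ℚ_[p]} (hu : ‖1 - u‖ < ‖(2 : ℚ_[p])‖ ^ 2) :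
    ∃ y : ℚ_[p], y ^ 2 = u := by
  have hu1 : ‖u‖ ≤ 1 := by
    have h2 : ‖(2 : ℚ_[p])‖ ≤ 1 := by
      have := Padic.norm_int_le_one (p := p) 2
      simpa using this
    have : ‖u‖ = ‖1 - (1 - u)‖ := by ring_nf
    rw [this]
    calc ‖(1 : ℚ_[p]) - (1 - u)‖ ≤ max ‖(1 : ℚ_[p])‖ ‖1 - u‖ := by
            simpa [norm_sub_rev] using Padic.nonarchimedean (1 : ℚ_[p]) (-(1-u))
      _ ≤ 1 := by
        apply max_le (by simp)
        exact le_trans hu.le (by nlinarith [norm_nonneg (2 : ℚ_[p])])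
  set U : ℤ_[p] := ⟨u, hu1⟩ with hU
  have key := hensels_lemma (F := (X ^ 2 - C U : Polynomial ℤ_[p])) (a := (1 : ℤ_[p])) ?_
  · obtain ⟨z, hz, -⟩ := key
    refine ⟨(z : ℚ_[p]), ?_⟩
    have : z ^ 2 - U = 0 := by simpa using hz
    have : (z : ℚ_[p]) ^ 2 - u = 0 := by
      have := congrArg (Subtype.val) this
      push_cast at this
      simpa using this
    linear_combination this
  · have hd : ((X ^ 2 - C U : Polynomial ℤ_[p]).derivative).eval 1 = 2 := by
      simp [derivative_sub, derivative_pow]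
    have he : (X ^ 2 - C U : Polynomial ℤ_[p]).eval 1 = 1 - U := by simp
    simp only [Polynomial.coe_aeval_eq_eval]
    rw [hd, he]
    have : ‖(1 - U : ℤ_[p])‖ = ‖1 - u‖ := by
      rw [PadicInt.norm_def]; push_cast; ring_nf
      rfl
    have h2 : ‖(2 : ℤ_[p])‖ = ‖(2 : ℚ_[p])‖ := by
      rw [PadicInt.norm_def]; norm_num
      rfl
    rw [this, h2]
    exact hu

private lemma two_norm_odd (hodd : p ≠ 2) : ‖(2 : ℚ_[p])‖ = 1 := by
  have hdvd : ¬((p : ℤ) ∣ 2) := by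
    intro hd
    have : p ∣ 2 := Int.ofNat_dvd.mp (by exact_mod_cast hd)
    exact hodd ((Nat.prime_dvd_prime_iff_eq (Fact.out : p.Prime) Nat.prime_two).mp this)
  have h1 := (Padic.norm_intCast_lt_one_iff (p := p) (k := 2)).not.mpr hdvd
  have h2 : ‖((2 : ℤ) : ℚ_[p])‖ ≤ 1 := Padic.norm_int_le_one 2
  push_cast at h1 h2
  push_neg at h1
  linarith

private lemma hom_int (σ : ℚ_[p] →+* ℚ_[p]) {w : ℚ_[p]} (hw : ‖w‖ ≤ 1) : ‖σ w‖ ≤ 1 := by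
  by_contra hc
  rw [Padic.norm_le_one_iff_val_nonneg] at hc
  push_neg at hc
  have hZ0 : σ w ≠ 0 := by
    intro h0; rw [h0] at hc; simp at hc
  have hvm1 : Padic.valuation (σ w) ≤ -1 := by omega
  -- square root of 1 + p^k * w^2
  have hsq : ∀ k : ℕ, ‖(p : ℚ_[p]) ^ k‖ < ‖(2 : ℚ_[p])‖ ^ 2 →
      ∃ Y : ℚ_[p], Y ^ 2 = 1 + (p : ℚ_[p]) ^ k * (σ w) ^ 2 := by
    intro k hk
    have : ‖(1 : ℚ_[p]) - (1 + (p : ℚ_[p]) ^ k * w ^ 2)‖ < ‖(2 : ℚ_[p])‖ ^ 2 := by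
      have he : (1 : ℚ_[p]) - (1 + (p : ℚ_[p]) ^ k * w ^ 2) = -((p : ℚ_[p]) ^ k * w ^ 2) := by
        ring
      rw [he, norm_neg, padicNormE.mul]
      calc ‖(p : ℚ_[p]) ^ k‖ * ‖w ^ 2‖ ≤ ‖(p : ℚ_[p]) ^ k‖ * 1 := by
            apply mul_le_mul_of_nonneg_left _ (norm_nonneg _)
            rw [norm_pow]
            exact pow_le_one₀ (norm_nonneg _) hw
        _ = ‖(p : ℚ_[p]) ^ k‖ := mul_one _
        _ < _ := hk
    obtain ⟨y, hy⟩ := exists_sqrt this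
    refine ⟨σ y, ?_⟩
    have := congrArg σ hy
    rw [map_pow] at this
    rw [this]
    push_cast [map_add, map_mul, map_pow, map_one, map_natCast]
    ring
  have hppow : ∀ k : ℕ, ((p : ℚ_[p]) ^ k) ≠ 0 := by
    intro k
    exact pow_ne_zero _ (Nat.cast_ne_zero.mpr (Fact.out : p.Prime).ne_zero)
  have hvalpk : ∀ k : ℕ, ((p : ℚ_[p]) ^ k).valuation = k := by
    intro k
    induction k with
    | zero => simp
    | succ n ih =>
        rw [pow_succ, Padic.valuation_mul (hppow n)
          (Nat.cast_ne_zero.mpr (Fact.out : p.Prime).ne_zero), ih, Padic.valuation_p]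
        push_cast; ring
  have hZ2 : ((σ w) ^ 2) ≠ 0 := pow_ne_zero _ hZ0
  have hvZ2 : ((σ w) ^ 2).valuation = 2 * (σ w).valuation := by
    rw [sq, Padic.valuation_mul hZ0 hZ0]; ring
  -- main case split
  rcases eq_or_ne p 2 with rfl | hodd
  · -- p = 2, use k = 3
    obtain ⟨Y, hY⟩ := hsq 3 (by
      rw [Padic.norm_p_pow]
      have h2 : ‖(2 : ℚ_[2])‖ = (2 : ℝ)⁻¹ := by
        simpa using Padic.norm_p (p := 2)
      rw [h2]
      norm_num)
    have hvE : ((2 : ℚ_[2] ) ^ 3 * (σ w) ^ 2).valuation = 3 + 2 * (σ w).valuation := by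
      rw [Padic.valuation_mul (by norm_num) hZ2, hvZ2]
      have := hvalpk 3
      push_cast at this ⊢
      rw [this]
    have hE0 : ((2 : ℚ_[2]) ^ 3 * (σ w) ^ 2) ≠ 0 := by
      push_cast at hppow ⊢
      exact mul_ne_zero (by norm_num) hZ2
    push_cast at hY
    rcases lt_or_eq_of_le hvm1 with hm2 | hm1
    · -- valuation ≤ -2 : parity contradiction
      have hneg : ((2 : ℚ_[2]) ^ 3 * (σ w) ^ 2).valuation < (1 : ℚ_[2]).valuation := by
        rw [hvE, Padic.valuation_one]; omega
      obtain ⟨hne, hval⟩ := pval_add_eq hE0 hneg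
      have hY0 : Y ≠ 0 := by
        intro h0
        rw [h0] at hY
        apply hne
        rw [add_comm] at hY
        simpa using hY.symm
      have hvY : (Y ^ 2).valuation = 2 * Y.valuation := by
        rw [sq, Padic.valuation_mul hY0 hY0]; ring
      rw [hY, add_comm] at hvY
      rw [hval, hvE] at hvY
      omega
    · -- valuation = -1
      have hvE1 : ((2 : ℚ_[2]) ^ 3 * (σ w) ^ 2).valuation = 1 := by
        rw [hvE]; omega
      have hpos : (1 : ℚ_[2]).valuation < ((2 : ℚ_[2]) ^ 3 * (σ w) ^ 2).valuation := by
        rw [hvE1, Padic.valuation_one]; omega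
      obtain ⟨hne, hval⟩ := pval_add_eq (one_ne_zero) hpos
      have hY0 : Y ≠ 0 := by
        intro h0
        rw [h0] at hY
        exact hne (by simpa using hY.symm)
      have hvY : (Y ^ 2).valuation = 2 * Y.valuation := by
        rw [sq, Padic.valuation_mul hY0 hY0]; ring
      rw [hY, hval, Padic.valuation_one] at hvY
      have hYval : Y.valuation = 0 := by omega
      have hY1 : Y ≠ 1 := by
        intro h1
        rw [h1] at hY
        exact hE0 (by linear_combination -hY)
      have hYm1 : Y ≠ -1 := by
        intro h1
        rw [h1] at hY
        exact hE0 (by linear_combination -hY)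
      have hs1 : Y - 1 ≠ 0 := sub_ne_zero.mpr hY1
      have hs2 : Y + 1 ≠ 0 := by
        intro h0
        exact hYm1 (by linear_combination h0)
      have hprod : (Y - 1) * (Y + 1) = (2 : ℚ_[2]) ^ 3 * (σ w) ^ 2 := by
        linear_combination hY
      have hvsum : (Y - 1).valuation + (Y + 1).valuation = 1 := by
        have := Padic.valuation_mul hs1 hs2
        rw [hprod, hvE1] at this
        omega
      have hvm1' : ((-1 : ℚ_[2])).valuation = 0 := by
        rw [pval_neg, Padic.valuation_one]
      have hv2 : (2 : ℚ_[2]).valuation = 1 := by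
        have := Padic.valuation_p (p := 2)
        simpa using this
      have hvm2 : ((-2 : ℚ_[2])).valuation = 1 := by
        rw [show ((-2 : ℚ_[2])) = -(2 : ℚ_[2]) by ring, pval_neg, hv2]
      have ha : 0 ≤ (Y - 1).valuation := by
        have h := Padic.le_valuation_add (x := Y) (y := (-1 : ℚ_[2]))
          (by rw [← sub_eq_add_neg]; exact hs1)
        rw [hYval, hvm1', ← sub_eq_add_neg] at h
        simpa using h
      have hb : 0 ≤ (Y + 1).valuation := by
        have h := Padic.le_valuation_add (x := Y) (y := (1 : ℚ_[2])) hs2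
        rw [hYval, Padic.valuation_one] at h
        simpa using h
      rcases (by omega : (Y - 1).valuation = 0 ∧ (Y + 1).valuation = 1 ∨
          (Y - 1).valuation = 1 ∧ (Y + 1).valuation = 0) with ⟨h1, h2⟩ | ⟨h1, h2⟩
      · have h := Padic.le_valuation_add (x := Y + 1) (y := (-2 : ℚ_[2]))
          (by rw [show Y + 1 + -2 = Y - 1 by ring]; exact hs1)
        rw [show Y + 1 + -2 = Y - 1 by ring, h2, hvm2, h1] at h
        simp at h
      · have h := Padic.le_valuation_add (x := Y - 1) (y := (2 : ℚ_[2]))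
          (by rw [show Y - 1 + 2 = Y + 1 by ring]; exact hs2)
        rw [show Y - 1 + 2 = Y + 1 by ring, h1, hv2, h2] at h
        simp at h
  · -- p odd, k = 1
    obtain ⟨Y, hY⟩ := hsq 1 (by
      rw [two_norm_odd hodd, Padic.norm_p_pow]
      have : (1 : ℝ) < p := by exact_mod_cast (Fact.out : p.Prime).one_lt
      calc (p : ℝ) ^ (-(1:ℕ) : ℤ) = (p:ℝ)⁻¹ := by norm_num
        _ < 1 := by
          rw [inv_lt_one_iff₀]; right; exact this
        _ = 1 ^ 2 := by norm_num)
    have hE0 : ((p : ℚ_[p]) ^ 1 * (σ w) ^ 2) ≠ 0 := mul_ne_zero (hppow 1) hZ2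
    have hvE : ((p : ℚ_[p]) ^ 1 * (σ w) ^ 2).valuation = 1 + 2 * (σ w).valuation := by
      rw [Padic.valuation_mul (hppow 1) hZ2, hvZ2, hvalpk]
      push_cast; ring
    have hneg : ((p : ℚ_[p]) ^ 1 * (σ w) ^ 2).valuation < (1 : ℚ_[p]).valuation := by
      rw [hvE, Padic.valuation_one]; omega
    obtain ⟨hne, hval⟩ := pval_add_eq hE0 hneg
    have hY0 : Y ≠ 0 := by
      intro h0
      rw [h0] at hY
      apply hne
      rw [add_comm] at hY
      simpa using hY.symm
    have hvY : (Y ^ 2).valuation = 2 * Y.valuation := by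
      rw [sq, Padic.valuation_mul hY0 hY0]; ring
    rw [hY, add_comm] at hvY
    rw [hval, hvE] at hvY
    omega

private lemma hom_norm_le (σ : ℚ_[p] →+* ℚ_[p]) (w : ℚ_[p]) : ‖σ w‖ ≤ ‖w‖ := by
  rcases eq_or_ne w 0 with rfl | hw
  · simp
  have hp1 : (1 : ℝ) < p := by exact_mod_cast (Fact.out : p.Prime).one_lt
  have hpR : (p : ℝ) ≠ 0 := by positivity
  set m := w.valuation with hm
  have hu : ‖(p : ℚ_[p]) ^ (-m) * w‖ ≤ 1 := by
    rw [padicNormE.mul, Padic.norm_p_zpow, Padic.norm_eq_zpow_neg_valuation hw, ← hm, ← zpow_add₀ hpR]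
    simp
  have h1 := hom_int σ hu
  have hrw : σ w = (p : ℚ_[p]) ^ m * σ ((p : ℚ_[p]) ^ (-m) * w) := by
    rw [map_mul, map_zpow₀, map_natCast, ← mul_assoc, ← zpow_add₀
      (Nat.cast_ne_zero.mpr (Fact.out : p.Prime).ne_zero)]
    simp
  rw [hrw, padicNormE.mul, Padic.norm_p_zpow, Padic.norm_eq_zpow_neg_valuation hw, ← hm]
  calc (p : ℝ) ^ (-m) * ‖σ ((p : ℚ_[p]) ^ (-m) * w)‖ ≤ (p : ℝ) ^ (-m) * 1 := by
        apply mul_le_mul_of_nonneg_left h1 (by positivity)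
    _ = (p : ℝ) ^ (-m) := mul_one _

private theorem padic_hom_id (σ : ℚ_[p] →+* ℚ_[p]) (z : ℚ_[p]) : σ z = z := by
  by_contra hne
  have hpos : 0 < ‖σ z - z‖ := norm_pos_iff.mpr (sub_ne_zero.mpr hne)
  obtain ⟨r, hr⟩ := Padic.rat_dense (p := p) (q := z) (half_pos hpos)
  have h1 : ‖σ z - σ r‖ ≤ ‖z - r‖ := by
    rw [← map_sub]
    exact hom_norm_le σ _
  have h2 : σ (r : ℚ_[p]) = (r : ℚ_[p]) := map_ratCast σ r
  have : ‖σ z - z‖ ≤ ‖σ z - σ r‖ + ‖(r : ℚ_[p]) - z‖ := by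
    calc ‖σ z - z‖ = ‖(σ z - σ r) + ((r : ℚ_[p]) - z)‖ := by rw [h2]; ring_nf
      _ ≤ _ := norm_add_le _ _
  rw [norm_sub_rev (r : ℚ_[p]) z] at this
  linarith

theorem stmt_14 (p : ℕ) [Fact p.Prime] (A : Subring ℚ_[p]) (x : ℚ_[p])
    (h : {z : ℚ_[p] | ∃ a ∈ A, ∃ b ∈ A, z = a + x * b} = Set.univ) :
    A = ⊤ := by
  by_contra hA
  -- every z is a + x b
  have hall : ∀ z : ℚ_[p], ∃ a ∈ A, ∃ b ∈ A, z = a + x * b := fun z =>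
    (Set.eq_univ_iff_forall.mp h) z
  -- every z satisfies a monic quadratic over A
  have quad : ∀ z : ℚ_[p], ∃ t d : ℚ_[p], t ∈ A ∧ d ∈ A ∧ z * z = t * z - d := by
    intro z
    obtain ⟨a1, ha1, b1, hb1, hz1⟩ := hall z
    obtain ⟨a2, ha2, b2, hb2, hz2⟩ := hall (z * x)
    refine ⟨a1 + b2, a1 * b2 - b1 * a2, add_mem ha1 hb2,
      sub_mem (mul_mem ha1 hb2) (mul_mem hb1 ha2), ?_⟩
    linear_combination (z - b2) * hz1 + b1 * hz2
  -- A is closed under inverses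
  have inv_mem : ∀ a : ℚ_[p], a ∈ A → a ≠ 0 → a⁻¹ ∈ A := by
    intro a ha ha0
    obtain ⟨t, d, ht, hd, hrel⟩ := quad a⁻¹
    have : a⁻¹ = t - d * a := by
      field_simp at hrel ⊢
      linear_combination hrel
    rw [this]
    exact sub_mem ht (mul_mem hd ha)
  -- pick α ∉ A
  rw [Subring.eq_top_iff'] at hA
  push_neg at hA
  obtain ⟨α, hα⟩ := hA
  obtain ⟨t, d, ht, hd, hrel⟩ := quad α
  -- β = α - t/2 with β² ∈ A
  have h2 : (2 : ℚ_[p]) ∈ A := by exact_mod_cast natCast_mem A 2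
  have h2i : (2 : ℚ_[p])⁻¹ ∈ A := inv_mem _ h2 two_ne_zero
  set β : ℚ_[p] := α - t * (2 : ℚ_[p])⁻¹ with hβ
  set c : ℚ_[p] := t * t * ((2 : ℚ_[p])⁻¹ * (2 : ℚ_[p])⁻¹) - d with hcdef
  have hc : β * β = c := by
    rw [hβ, hcdef]
    have h22 : (2 : ℚ_[p]) * (2 : ℚ_[p])⁻¹ = 1 := mul_inv_cancel₀ two_ne_zero
    linear_combination hrel + (t * α - t * t * (2:ℚ_[p])⁻¹) * h22
  have hcA : c ∈ A := sub_mem (mul_mem (mul_mem ht ht) (mul_mem h2i h2i)) hd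
  have hβA : β ∉ A := by
    intro hm
    apply hα
    have : α = β + t * (2 : ℚ_[p])⁻¹ := by rw [hβ]; ring
    rw [this]
    exact add_mem hm (mul_mem ht h2i)
  -- express x in terms of β
  obtain ⟨s, hs, r, hrA, hβx⟩ := hall β
  have hr0 : r ≠ 0 := by
    intro h0
    apply hβA
    rw [h0, mul_zero, add_zero] at hβx
    rw [hβx]; exact hs
  have hriA : r⁻¹ ∈ A := inv_mem _ hrA hr0
  have hxeq : x = (β - s) * r⁻¹ := by
    rw [hβx]
    field_simp
    ring
  -- representation z = u + v β
  have repr : ∀ z : ℚ_[p], ∃ u v : ℚ_[p], (u ∈ A ∧ v ∈ A) ∧ z = u + v * β := by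
    intro z
    obtain ⟨a, ha, b, hb, hz⟩ := hall z
    refine ⟨a - s * r⁻¹ * b, r⁻¹ * b,
      ⟨sub_mem ha (mul_mem (mul_mem hs hriA) hb), mul_mem hriA hb⟩, ?_⟩
    rw [hz, hxeq]; ring
  -- uniqueness of representation
  have uniq : ∀ u v u' v' : ℚ_[p], u ∈ A → v ∈ A → u' ∈ A → v' ∈ A →
      u + v * β = u' + v' * β → u = u' ∧ v = v' := by
    intro u v u' v' hu hv hu' hv' heq
    by_cases hvv : v = v'
    · subst hvv
      constructor
      · have : u + v * β - v * β = u' + v * β - v * β := by rw [heq]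
        simpa using this
      · rfl
    · exfalso
      apply hβA
      have hne : v' - v ≠ 0 := sub_ne_zero.mpr (Ne.symm hvv)
      have hβval : β = (u - u') * (v' - v)⁻¹ := by
        have h3 : (v' - v) * β = u - u' := by linear_combination -heq
        rw [← h3]
        field_simp
      rw [hβval]
      exact mul_mem (sub_mem hu hu') (inv_mem _ (sub_mem hv' hv) hne)
  choose F G hmem hFG using repr
  have hFA : ∀ z, F z ∈ A := fun z => (hmem z).1
  have hGA : ∀ z, G z ∈ A := fun z => (hmem z).2
  -- conjugation is a ring hom
  have Fadd : ∀ z w : ℚ_[p], F (z + w) = F z + F w ∧ G (z + w) = G z + G w := by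
    intro z w
    apply uniq _ _ _ _ (hFA _) (hGA _) (add_mem (hFA z) (hFA w)) (add_mem (hGA z) (hGA w))
    rw [← hFG (z + w)]
    conv_lhs => rw [hFG z, hFG w]
    ring
  have Fmul : ∀ z w : ℚ_[p], F (z * w) = F z * F w + G z * G w * c ∧
      G (z * w) = F z * G w + G z * F w := by
    intro z w
    apply uniq _ _ _ _ (hFA _) (hGA _)
      (add_mem (mul_mem (hFA z) (hFA w)) (mul_mem (mul_mem (hGA z) (hGA w)) hcA))
      (add_mem (mul_mem (hFA z) (hGA w)) (mul_mem (hGA z) (hFA w)))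
    rw [← hFG (z * w)]
    conv_lhs => rw [hFG z, hFG w]
    linear_combination (G z * G w) * hc
  have Fone : F 1 = 1 ∧ G 1 = 0 := by
    apply uniq _ _ _ _ (hFA _) (hGA _) (one_mem A) (zero_mem A)
    rw [← hFG 1]; ring
  have Fzero : F 0 = 0 ∧ G 0 = 0 := by
    apply uniq _ _ _ _ (hFA _) (hGA _) (zero_mem A) (zero_mem A)
    rw [← hFG 0]; ring
  have Fβ : F β = 0 ∧ G β = 1 := by
    apply uniq _ _ _ _ (hFA _) (hGA _) (zero_mem A) (one_mem A)
    rw [← hFG β]; ring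
  set σ : ℚ_[p] →+* ℚ_[p] :=
    { toFun := fun z => F z - G z * β
      map_one' := by rw [Fone.1, Fone.2]; ring
      map_zero' := by rw [Fzero.1, Fzero.2]; ring
      map_add' := by
        intro z w
        rw [(Fadd z w).1, (Fadd z w).2]; ring
      map_mul' := by
        intro z w
        rw [(Fmul z w).1, (Fmul z w).2]
        linear_combination (-(G z * G w)) * hc } with hσ
  have hσβ : σ β = -β := by
    show F β - G β * β = -β
    rw [Fβ.1, Fβ.2]; ring
  have hid : σ β = β := padic_hom_id σ β
  rw [hσβ] at hid
  have hβ0 : β = 0 := by linear_combination -hid / 2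
  exact hβA (hβ0 ▸ zero_mem A)
end

section
/- If F is a subfield of ℚ_p such that the extension ℚ_p/F is finite, then F = ℚ_p. -/
open Polynomial IntermediateField

set_option maxHeartbeats 1000000
set_option synthInstance.maxHeartbeats 1000000

/-- Hensel: `m`-th roots of elements close to 1, for `p ∤ m`. -/
lemma padic_exists_pow_root {p : ℕ} [Fact p.Prime] {m : ℕ} (hm0 : 0 < m) (hmd : ¬ p ∣ m)
    {c : ℚ_[p]} (hc : ‖c - 1‖ < 1) : ∃ y : ℚ_[p], y ^ m = c := by
  have hc1 : ‖c‖ ≤ 1 := by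
    have h := Padic.nonarchimedean (c - 1) 1
    simp only [sub_add_cancel, norm_one] at h
    exact h.trans (max_le hc.le le_rfl)
  set c' : ℤ_[p] := ⟨c, hc1⟩ with hc'
  set G : Polynomial ℤ_[p] := X ^ m - C c' with hG
  have h1 : G.eval 1 = 1 - c' := by simp [hG]
  have h2 : G.derivative.eval 1 = (m : ℤ_[p]) := by
    simp [hG, derivative_X_pow]
  have hm1 : ‖(m : ℤ_[p])‖ = 1 := by
    have hle : ‖(m : ℤ_[p])‖ ≤ 1 := PadicInt.norm_le_one _
    have hlt : ¬ ‖(m : ℤ_[p])‖ < 1 := by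
      have : ‖(m : ℤ_[p])‖ = ‖((m : ℤ) : ℚ_[p])‖ := by
        rw [PadicInt.norm_def]; push_cast; ring_nf
      rw [this, Padic.norm_intCast_lt_one_iff]
      intro hdvd
      exact hmd (by exact_mod_cast hdvd)
    linarith [lt_or_eq_of_le hle |>.resolve_left hlt]
  have key : ‖G.eval 1‖ < ‖G.derivative.eval 1‖ ^ 2 := by
    rw [h1, h2, hm1, one_pow, PadicInt.norm_def]
    push_cast
    rwa [norm_sub_rev]
  obtain ⟨z, hz, -⟩ := hensels_lemma key
  refine ⟨(z : ℚ_[p]), ?_⟩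
  have hzm : z ^ m = c' := by
    have := sub_eq_zero.mp (by simpa [hG] using hz)
    simpa using this
  have := congrArg (fun t : ℤ_[p] => (t : ℚ_[p])) hzm
  push_cast at this
  simpa [hc'] using this

/-- Fermat: units are `p-1`-th power close to 1. -/
lemma padic_norm_pow_sub_one_lt {p : ℕ} [Fact p.Prime] {u : ℚ_[p]} (hu : ‖u‖ = 1) :
    ‖u ^ (p - 1) - 1‖ < 1 := by
  set u' : ℤ_[p] := ⟨u, hu.le⟩ with hu'
  have hz : PadicInt.toZMod u' ≠ 0 := by
    intro h0
    have hker : u' ∈ RingHom.ker (PadicInt.toZMod (p := p)) := h0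
    rw [PadicInt.ker_toZMod, IsLocalRing.mem_maximalIdeal, mem_nonunits_iff] at hker
    have : ‖u'‖ = 1 := by rw [PadicInt.norm_def]; exact hu
    exact hker (PadicInt.isUnit_iff.mpr this)
  have h1 : PadicInt.toZMod (u' ^ (p - 1) - 1) = 0 := by
    rw [map_sub, map_pow, map_one, ZMod.pow_card_sub_one_eq_one hz, sub_self]
  have h2 : ‖u' ^ (p - 1) - 1‖ < 1 := by
    have : u' ^ (p - 1) - 1 ∈ RingHom.ker (PadicInt.toZMod (p := p)) := h1
    rw [PadicInt.ker_toZMod, IsLocalRing.mem_maximalIdeal, mem_nonunits_iff,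
      PadicInt.isUnit_iff] at this
    exact lt_of_le_of_ne (PadicInt.norm_le_one _) this
  rw [PadicInt.norm_def] at h2
  push_cast at h2
  simpa [hu'] using h2

/-- Key rigidity: for a field `K` with `ℚ_[p]` finite over it, the algebra norm
has absolute value `‖y‖ ^ n`. -/
lemma padic_norm_algebra_norm {p : ℕ} [Fact p.Prime] (K : Type*) [Field K] [Algebra K ℚ_[p]]
    [FiniteDimensional K ℚ_[p]] (y : ℚ_[p]) (hy0 : y ≠ 0) :
    ‖algebraMap K ℚ_[p] (Algebra.norm K y)‖ = ‖y‖ ^ (Module.finrank K ℚ_[p]) := by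
  have hp : p.Prime := Fact.out
  have hpR1 : (1 : ℝ) < (p : ℝ) := by exact_mod_cast hp.one_lt
  have hpR0 : (0 : ℝ) < (p : ℝ) := by positivity
  have hinj : Function.Injective (algebraMap K ℚ_[p]) := (algebraMap K ℚ_[p]).injective
  -- Step 1 : units go to norm-one elements
  have step1 : ∀ u : ℚ_[p], ‖u‖ = 1 → ‖algebraMap K ℚ_[p] (Algebra.norm K u)‖ = 1 := by
    intro u hu
    have hu0 : u ≠ 0 := by rintro rfl; simp at hu
    set t := algebraMap K ℚ_[p] (Algebra.norm K u) with ht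
    have ht0 : t ≠ 0 := by
      simp only [ht, map_ne_zero_iff _ hinj]
      exact Algebra.norm_ne_zero_iff.mpr hu0
    set k := t.valuation with hk
    have hnt : ‖t‖ = (p : ℝ) ^ (-k) := Padic.norm_eq_zpow_neg_valuation ht0
    have key : ∀ m : ℕ, 0 < m → ¬ p ∣ m → (m : ℤ) ∣ (p - 1 : ℕ) * k := by
      intro m hm0 hmd
      obtain ⟨y, hy⟩ := padic_exists_pow_root hm0 hmd (padic_norm_pow_sub_one_lt hu)
      have hy0 : y ≠ 0 := by
        rintro rfl
        rw [zero_pow hm0.ne'] at hy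
        exact pow_ne_zero _ hu0 hy.symm
      set s := algebraMap K ℚ_[p] (Algebra.norm K y) with hs
      have hs0 : s ≠ 0 := by
        simp only [hs, map_ne_zero_iff _ hinj]
        exact Algebra.norm_ne_zero_iff.mpr hy0
      have hpow : s ^ m = t ^ (p - 1) := by
        rw [hs, ht, ← map_pow, ← map_pow, ← map_pow, ← map_pow, hy]
      have hnorm := congrArg (fun z : ℚ_[p] => ‖z‖) hpow
      simp only [norm_pow] at hnorm
      rw [Padic.norm_eq_zpow_neg_valuation hs0, hnt, ← zpow_natCast ((p:ℝ) ^ (-s.valuation)),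
        ← zpow_natCast ((p:ℝ) ^ (-k)), ← zpow_mul, ← zpow_mul,
        zpow_right_inj₀ hpR0 (ne_of_gt hpR1)] at hnorm
      refine ⟨s.valuation, ?_⟩
      push_cast at hnorm ⊢
      linarith
    -- choose a big m coprime to p
    have hk0 : k = 0 := by
      by_contra hkne
      set m : ℕ := (p - 1) * k.natAbs * p + 1 with hm
      have hm0 : 0 < m := Nat.succ_pos _
      have hmd : ¬ p ∣ m := by
        intro hdvd
        have h1 : p ∣ (p - 1) * k.natAbs * p := dvd_mul_left p _
        have := Nat.le_of_dvd one_pos ((Nat.dvd_add_right h1).mp hdvd)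
        have := hp.two_le
        omega
      have hdvd := key m hm0 hmd
      have hne : ((p - 1 : ℕ) : ℤ) * k ≠ 0 := by
        apply mul_ne_zero _ hkne
        have h1 : 1 ≤ p - 1 := Nat.le_sub_one_of_lt hp.one_lt
        exact_mod_cast Nat.one_le_iff_ne_zero.mp h1
      have hdvd' : (m : ℤ) ∣ |((p - 1 : ℕ) : ℤ) * k| := (dvd_abs _ _).mpr hdvd
      have hle := Int.le_of_dvd (abs_pos.mpr hne) hdvd'
      rw [abs_mul, Int.abs_natCast, Int.abs_eq_natAbs] at hle
      have hle' : m ≤ (p - 1) * k.natAbs := by exact_mod_cast hle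
      have h2 : (p - 1) * k.natAbs ≤ (p - 1) * k.natAbs * p := Nat.le_mul_of_pos_right _ hp.pos
      omega
    rw [hnt, hk0]
    norm_num
  -- Step 2 : general element
  set n := Module.finrank K ℚ_[p] with hn
  set v := y.valuation with hv
  have hpQ0 : (p : ℚ_[p]) ≠ 0 := by
    exact_mod_cast Nat.cast_ne_zero.mpr hp.ne_zero
  set u := y * (p : ℚ_[p]) ^ (-v) with hudef
  have hu : ‖u‖ = 1 := by
    rw [hudef, norm_mul, Padic.norm_p_zpow, Padic.norm_eq_zpow_neg_valuation hy0, neg_neg,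
      ← zpow_add₀ (ne_of_gt hpR0)]
    simp [hv]
  have hyu : y = u * (p : ℚ_[p]) ^ v := by
    rw [hudef, mul_assoc, ← zpow_add₀ hpQ0]
    simp
  have halg : ((p : ℚ_[p]) ^ v) = algebraMap K ℚ_[p] ((p : K) ^ v) := by
    rw [map_zpow₀, map_natCast]
  have hsplit : algebraMap K ℚ_[p] (Algebra.norm K y)
      = algebraMap K ℚ_[p] (Algebra.norm K u) * ((p : ℚ_[p]) ^ v) ^ n := by
    conv_lhs => rw [hyu]
    rw [map_mul, map_mul]
    congr 1
    rw [halg, Algebra.norm_algebraMap, map_pow, ← halg, hn]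
  rw [hsplit, norm_mul, step1 u hu, one_mul, norm_pow, Padic.norm_p_zpow,
    Padic.norm_eq_zpow_neg_valuation hy0]

/-- Tower version: the norm from an intermediate field. -/
lemma padic_norm_inter {p : ℕ} [Fact p.Prime] (F : Subfield ℚ_[p]) [FiniteDimensional F ℚ_[p]]
    (E : IntermediateField F ℚ_[p]) (z : E) (hz : (z : ℚ_[p]) ≠ 0) :
    ‖algebraMap F ℚ_[p] (Algebra.norm F z)‖ = ‖(z : ℚ_[p])‖ ^ (Module.finrank F E) := by
  haveI : FiniteDimensional F E := FiniteDimensional.left F E ℚ_[p]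
  haveI : FiniteDimensional E ℚ_[p] := FiniteDimensional.right F E ℚ_[p]
  set n := Module.finrank F ℚ_[p] with hn
  set m := Module.finrank E ℚ_[p] with hm
  set d := Module.finrank F E with hd
  have hdm : d * m = n := Module.finrank_mul_finrank F E ℚ_[p]
  have hm0 : 0 < m := Module.finrank_pos
  have h1 : Algebra.norm F ((z : ℚ_[p])) = (Algebra.norm F z) ^ m := by
    rw [← Algebra.norm_norm (R := F) (S := E) (a := (z : ℚ_[p])),
      show ((z : ℚ_[p])) = algebraMap E ℚ_[p] z from rfl, Algebra.norm_algebraMap, map_pow]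
  have h2 := padic_norm_algebra_norm F ((z : ℚ_[p])) hz
  rw [h1, map_pow, norm_pow] at h2
  have h3 : (‖(z : ℚ_[p])‖ ^ d) ^ m = ‖(z : ℚ_[p])‖ ^ n := by rw [← pow_mul, hdm]
  exact (pow_left_inj₀ (norm_nonneg _) (pow_nonneg (norm_nonneg _) _) hm0.ne').mp
    (h2.trans h3.symm)

theorem stmt_15 (p : ℕ) [Fact p.Prime] (F : Subfield ℚ_[p])
    (h : Module.Finite F ℚ_[p]) : F = ⊤ := by
  haveI := h
  by_contra hne
  obtain ⟨x, hx⟩ : ∃ x : ℚ_[p], x ∉ F := by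
    by_contra hall
    push_neg at hall
    exact hne (SetLike.ext fun y => by simp [hall y])
  have hxint : IsIntegral F x := IsIntegral.of_finite F x
  set f : Polynomial F := minpoly F x with hf
  set d := f.natDegree with hdd
  have hd1 : ¬ d ≤ 1 := by
    intro hle
    have hd0 : 0 < d := minpoly.natDegree_pos hxint
    have : d = 1 := le_antisymm hle hd0
    obtain ⟨a, ha⟩ := (minpoly.natDegree_eq_one_iff).mp this
    exact hx (ha ▸ a.2)
  have hd2 : 2 ≤ d := by omega
  -- factor the minimal polynomial over ℚ_[p]
  set g : Polynomial ℚ_[p] := f.map (algebraMap F ℚ_[p]) with hg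
  have hgx : g.eval x = 0 := by
    rw [hg, Polynomial.eval_map, ← Polynomial.aeval_def]
    exact minpoly.aeval F x
  obtain ⟨q, hq⟩ : (X - C x) ∣ g := Polynomial.dvd_iff_isRoot.mpr hgx
  set c := q.eval x with hc
  have hgder : g.derivative.eval x = c := by
    rw [hq]
    simp [Polynomial.derivative_mul, hc]
  have hc0 : c ≠ 0 := by
    have hsep : g.Separable := (minpoly.irreducible hxint).separable.map
    obtain ⟨a, b, hab⟩ := hsep
    have := congrArg (Polynomial.eval x) hab
    simp only [Polynomial.eval_add, Polynomial.eval_mul, Polynomial.eval_one, hgx, hgder,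
      mul_zero, zero_add] at this
    intro hc'
    rw [hc', mul_zero] at this
    exact one_ne_zero this.symm
  have hcpos : 0 < ‖c‖ := norm_pos_iff.mpr hc0
  -- choose a good rational approximation
  have hcont : ContinuousAt (fun y : ℚ_[p] => q.eval y) x := q.continuous.continuousAt
  obtain ⟨δ, hδ0, hδ⟩ := Metric.continuousAt_iff.mp hcont (‖c‖ / 2) (by positivity)
  set ε := min δ (min 1 (‖c‖ / 2)) with hε
  have hε0 : 0 < ε := by
    apply lt_min hδ0
    apply lt_min one_pos
    positivity
  obtain ⟨r, hr⟩ := Padic.rat_dense p x hε0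
  set a0 : F := ⟨(r : ℚ_[p]), SubfieldClass.ratCast_mem F r⟩ with ha0
  set ξ := x - (a0 : ℚ_[p]) with hξ
  have hξ0 : ξ ≠ 0 := by
    rw [hξ, sub_ne_zero]
    intro hxa
    exact hx (hxa ▸ a0.2)
  have hξnorm : ‖ξ‖ < ε := by rw [hξ, ha0]; exact hr
  -- the norm identity
  have hξint : IsIntegral F ξ := by
    have : ξ = x - algebraMap F ℚ_[p] a0 := rfl
    rw [this]
    exact hxint.sub isIntegral_algebraMap
  set pb := IntermediateField.adjoin.powerBasis hξint with hpb
  have hgen : (algebraMap (↥F⟮ξ⟯) ℚ_[p]) pb.gen = ξ := by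
    rw [hpb, IntermediateField.adjoin.powerBasis_gen]
    exact IntermediateField.AdjoinSimple.algebraMap_gen F ξ
  have hminξ : minpoly F ξ = f.comp (X + C a0) := by
    have := minpoly.sub_algebraMap (A := F) (B := ℚ_[p]) x a0
    rw [show algebraMap F ℚ_[p] a0 = (a0 : ℚ_[p]) from rfl] at this
    exact this
  have hminpb : minpoly F pb.gen = f.comp (X + C a0) := by
    rw [hpb, IntermediateField.adjoin.powerBasis_gen, IntermediateField.minpoly_gen, hminξ]
  have hcoeff : (minpoly F pb.gen).coeff 0 = f.eval a0 := by
    rw [hminpb, Polynomial.coeff_zero_eq_eval_zero, Polynomial.eval_comp]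
    simp
  have hdim : Module.finrank F F⟮ξ⟯ = d := by
    rw [IntermediateField.adjoin.finrank hξint, hminξ, Polynomial.natDegree_comp]
    simp [hdd]
  have hnormgen := Algebra.PowerBasis.norm_gen_eq_coeff_zero_minpoly pb
  -- compute both sides
  have hLHS : ‖algebraMap F ℚ_[p] (Algebra.norm F pb.gen)‖ = ‖algebraMap F ℚ_[p] (f.eval a0)‖ := by
    rw [hnormgen, hcoeff, map_mul, norm_mul, map_pow, map_neg, map_one]
    simp
  have hcoe : ((pb.gen : ℚ_[p])) = ξ := hgen
  have hinter := padic_norm_inter F F⟮ξ⟯ pb.gen (by rw [hcoe]; exact hξ0)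
  rw [hLHS, hdim] at hinter
  rw [hcoe] at hinter
  -- evaluation side
  have heval : algebraMap F ℚ_[p] (f.eval a0) = g.eval (a0 : ℚ_[p]) := by
    rw [hg, Polynomial.eval_map, show ((a0 : ℚ_[p])) = algebraMap F ℚ_[p] a0 from rfl,
      Polynomial.eval₂_at_apply]
  have hfactor : g.eval (a0 : ℚ_[p]) = -ξ * q.eval (a0 : ℚ_[p]) := by
    rw [hq]
    simp [hξ]
  have hkey : ‖ξ‖ ^ d = ‖ξ‖ * ‖q.eval (a0 : ℚ_[p])‖ := by
    rw [← hinter, heval, hfactor, norm_mul, norm_neg]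
  have hd' : ‖ξ‖ ^ (d - 1) = ‖q.eval (a0 : ℚ_[p])‖ := by
    have hξn0 : ‖ξ‖ ≠ 0 := norm_ne_zero_iff.mpr hξ0
    have : ‖ξ‖ ^ (d - 1) * ‖ξ‖ = ‖q.eval (a0 : ℚ_[p])‖ * ‖ξ‖ := by
      rw [← pow_succ]
      have : d - 1 + 1 = d := by omega
      rw [this, hkey]
      ring
    exact mul_right_cancel₀ hξn0 this
  -- contradiction
  have hqa : ‖c‖ / 2 ≤ ‖q.eval (a0 : ℚ_[p])‖ := by
    have hdist : dist (a0 : ℚ_[p]) x < δ := by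
      rw [dist_eq_norm, ← norm_neg, neg_sub, ← hξ]
      exact hξnorm.trans_le (min_le_left _ _)
    have h2 := hδ hdist
    rw [dist_eq_norm] at h2
    have h2' : ‖q.eval (a0 : ℚ_[p]) - c‖ < ‖c‖ / 2 := by simpa [hc] using h2
    have h3 : ‖c‖ ≤ ‖c - q.eval (a0 : ℚ_[p])‖ + ‖q.eval (a0 : ℚ_[p])‖ := by
      calc ‖c‖ = ‖(c - q.eval (a0 : ℚ_[p])) + q.eval (a0 : ℚ_[p])‖ := by ring_nf
      _ ≤ _ := norm_add_le _ _
    rw [norm_sub_rev] at h3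
    linarith
  have hsmall : ‖ξ‖ ^ (d - 1) < ‖c‖ / 2 := by
    have h1 : ‖ξ‖ ≤ 1 := le_of_lt (hξnorm.trans_le ((min_le_right _ _).trans (min_le_left _ _)))
    have h2 : ‖ξ‖ < ‖c‖ / 2 := hξnorm.trans_le ((min_le_right _ _).trans (min_le_right _ _))
    calc ‖ξ‖ ^ (d - 1) ≤ ‖ξ‖ := pow_le_of_le_one (norm_nonneg _) h1 (by omega)
    _ < ‖c‖ / 2 := h2
  rw [hd'] at hsmall
  linarith
end

section
/- Let F be a subfield of ℝ and x ∈ ℝ \ F such that F is a maximal subfield avoiding x (i.e., every subfield strictly containing F contains x). Then the extension ℝ/F is algebraic, i.e., every real number is algebraic over F. -/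
set_option maxHeartbeats 1000000
set_option synthInstance.maxHeartbeats 400000

open Polynomial IntermediateField

private lemma mem_adjoin_of_closure (F : Subfield ℝ) (y z : ℝ)
    (h : z ∈ Subfield.closure ((F : Set ℝ) ∪ {y})) :
    z ∈ IntermediateField.adjoin F {y} := by
  have hle : Subfield.closure ((F : Set ℝ) ∪ {y}) ≤
      (IntermediateField.adjoin F {y}).toSubfield := by
    apply Subfield.closure_le.2
    rintro w (hw | hw)
    · exact (IntermediateField.adjoin F {y}).algebraMap_mem ⟨w, hw⟩
    · exact IntermediateField.subset_adjoin F {y} hw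
  exact hle h

private lemma lemB_s16 (F : Subfield ℝ) (x : ℝ) (hx : x ∉ F)
    (ht : Transcendental F x) (hmem : x ∈ IntermediateField.adjoin F {x ^ 2}) : False := by
  obtain ⟨p, q, hpq⟩ := (IntermediateField.mem_adjoin_simple_iff F x).mp hmem
  have hq : (aeval (x ^ 2)) q ≠ 0 := by
    intro h0
    rw [h0, div_zero] at hpq
    exact hx (hpq ▸ F.zero_mem)
  have hq0 : q ≠ 0 := fun h => hq (by simp [h])
  have key : aeval x (X * expand F 2 q - expand F 2 p) = 0 := by
    have : x * aeval (x ^ 2) q = aeval (x ^ 2) p := by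
      exact ((div_eq_iff hq).mp hpq.symm).symm
    simp only [map_sub, map_mul, aeval_X, expand_aeval, this, sub_self]
  have h0 : X * expand F 2 q - expand F 2 p = 0 := by
    by_contra h
    exact ht ⟨_, h, key⟩
  rw [sub_eq_zero] at h0
  have heq0 : expand F 2 q ≠ 0 := fun h => hq0 ((Polynomial.expand_eq_zero two_pos).mp h)
  have hp0 : p ≠ 0 := by
    rintro rfl
    rw [map_zero] at h0
    rcases mul_eq_zero.mp h0 with h | h
    · exact X_ne_zero h
    · exact heq0 h
  have hd := congrArg natDegree h0
  rw [natDegree_X_mul heq0, natDegree_expand, natDegree_expand] at hd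
  omega

private lemma lemA_s16 (F : Subfield ℝ) (x y : ℝ) (hx : x ∉ F)
    (hxa : IsIntegral F x) (hmem : x ∈ IntermediateField.adjoin F {y}) :
    IsAlgebraic F y := by
  obtain ⟨p, q, hpq⟩ := (IntermediateField.mem_adjoin_simple_iff F x).mp hmem
  have hq : (aeval y) q ≠ 0 := by
    intro h0
    rw [h0, div_zero] at hpq
    exact hx (hpq ▸ F.zero_mem)
  have hq0 : q ≠ 0 := fun h => hq (by simp [h])
  set K := IntermediateField.adjoin F {x} with hK
  have hxK : x ∈ K := IntermediateField.mem_adjoin_simple_self F x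
  set xK : K := ⟨x, hxK⟩ with hxKdef
  haveI : FiniteDimensional F K := IntermediateField.adjoin.finiteDimensional hxa
  haveI : Algebra.IsIntegral F K := Algebra.IsIntegral.of_finite F K
  set r : Polynomial K := p.map (algebraMap F K) - C xK * q.map (algebraMap F K) with hr
  have hr0 : r ≠ 0 := by
    intro h
    rw [hr, sub_eq_zero] at h
    have hc := congrArg (fun f => Polynomial.coeff f q.natDegree) h
    simp only [coeff_map, coeff_C_mul] at hc
    have hlc : q.coeff q.natDegree ≠ 0 := by
      exact leadingCoeff_ne_zero.mpr hq0
    have hphi : algebraMap F K (q.coeff q.natDegree) ≠ 0 :=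
      (map_ne_zero_iff (algebraMap F K) (algebraMap F K).injective).mpr hlc
    have : xK = algebraMap F K (p.coeff q.natDegree / q.coeff q.natDegree) := by
      rw [map_div₀, eq_div_iff hphi]
      exact hc.symm
    apply hx
    have hx' : x = algebraMap F ℝ (p.coeff q.natDegree / q.coeff q.natDegree) := by
      have := congrArg (algebraMap K ℝ) this
      rwa [← IsScalarTower.algebraMap_apply] at this
    rw [hx']
    show ((p.coeff q.natDegree / q.coeff q.natDegree : F) : ℝ) ∈ F
    exact Subtype.coe_prop _
  have hyK : IsAlgebraic K y := by
    refine ⟨r, hr0, ?_⟩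
    rw [hr]
    have hxx : algebraMap K ℝ xK = x := rfl
    simp only [map_sub, map_mul, aeval_C, aeval_map_algebraMap, hxx]
    have : x * aeval y q = aeval y p := by
      exact ((div_eq_iff hq).mp hpq.symm).symm
    rw [this, sub_self]
  exact (isIntegral_trans y hyK.isIntegral).isAlgebraic

theorem stmt_16 (F : Subfield ℝ) (x : ℝ) (hx : x ∉ F)
    (hmax : ∀ y : ℝ, y ∉ F → x ∈ Subfield.closure ((F : Set ℝ) ∪ {y})) :
    ∀ y : ℝ, IsAlgebraic F y := by
  have key : ∀ y : ℝ, y ∉ F → x ∈ IntermediateField.adjoin F {y} :=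
    fun y hy => mem_adjoin_of_closure F y x (hmax y hy)
  have hxalg : IsIntegral F x := by
    by_contra h
    have ht : Transcendental F x := fun ha => h ha.isIntegral
    by_cases h2 : x ^ 2 ∈ F
    · refine ht ⟨X ^ 2 - C ⟨x ^ 2, h2⟩, X_pow_sub_C_ne_zero two_pos _, ?_⟩
      have : algebraMap F ℝ ⟨x ^ 2, h2⟩ = x ^ 2 := rfl
      simp [this]
    · exact lemB_s16 F x hx ht (key _ h2)
  intro y
  by_cases hy : y ∈ F
  · refine ⟨X - C ⟨y, hy⟩, X_sub_C_ne_zero _, ?_⟩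
    have : algebraMap F ℝ ⟨y, hy⟩ = y := rfl
    simp [this]
  · exact lemA_s16 F x y hx hxalg (key y hy)
end

section
/- If A = ⋃_{n≥1} A_n is an F_σ subset of ℝ with each A_n compact and A has Lebesgue measure zero and A is an additive subgroup of ℝ, then the set {x ∈ ℝ : μ(A + x·A) = 0} is comeager in ℝ; in particular there exists an irrational x such that A + x·A is Lebesgue null. -/
open MeasureTheory Set Metric Filter
open scoped ENNReal Pointwise NNReal

theorem stmt_19 (A : AddSubgroup ℝ) (C : ℕ → Set ℝ)
    (hC : ∀ n, IsCompact (C n)) (hA : (A : Set ℝ) = ⋃ n, C n)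
    (hnull : MeasureTheory.volume (A : Set ℝ) = 0) :
    {x : ℝ | MeasureTheory.volume {z : ℝ | ∃ a ∈ A, ∃ b ∈ A, z = a + x * b} = 0}
        ∈ residual ℝ ∧
    ∃ x : ℝ, Irrational x ∧
      MeasureTheory.volume {z : ℝ | ∃ a ∈ A, ∃ b ∈ A, z = a + x * b} = 0 := by
  set S : ℝ → Set ℝ := fun x => {z : ℝ | ∃ a ∈ A, ∃ b ∈ A, z = a + x * b} with hSdef
  -- scaled copies of A are null
  have hsmul : ∀ r : ℝ, volume (r • (A : Set ℝ)) = 0 := by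
    intro r
    rw [Measure.addHaar_smul]
    simp [hnull]
  -- rational x give null sets
  have hrat : ∀ q : ℚ, volume (S (q : ℝ)) = 0 := by
    intro q
    have hden : (q.den : ℝ) ≠ 0 := by
      exact_mod_cast q.den_nz
    have hsub : S (q : ℝ) ⊆ ((q.den : ℝ))⁻¹ • (A : Set ℝ) := by
      rintro z ⟨a, ha, b, hb, rfl⟩
      refine ⟨(q.den : ℝ) * a + (q.num : ℝ) * b, ?_, ?_⟩
      · have h1 : (q.den : ℝ) * a = (q.den : ℕ) • a := by
          simp [nsmul_eq_mul]
        have h2 : (q.num : ℝ) * b = q.num • b := by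
          simp [zsmul_eq_mul]
        rw [h1, h2]
        exact A.add_mem (A.nsmul_mem ha q.den) (A.zsmul_mem hb q.num)
      · show ((q.den : ℝ))⁻¹ • ((q.den : ℝ) * a + (q.num : ℝ) * b) = a + ↑q * b
        rw [smul_eq_mul, Rat.cast_def]
        field_simp
    exact measure_mono_null hsub (hsmul _)
  -- the compact pieces
  set K : ℕ → ℕ → ℝ → Set ℝ :=
    fun n m x => (fun p : ℝ × ℝ => p.1 + x * p.2) '' (C n ×ˢ C m) with hKdef
  have hKcomp : ∀ n m x, IsCompact (K n m x) := fun n m x =>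
    ((hC n).prod (hC m)).image (continuous_fst.add (continuous_const.mul continuous_snd))
  set U : ℕ → ℕ → ℕ → Set ℝ :=
    fun n m k => {x : ℝ | volume (K n m x) < ((k : ℝ≥0∞) + 1)⁻¹} with hUdef
  have hopen : ∀ n m k, IsOpen (U n m k) := by
    intro n m k
    rw [Metric.isOpen_iff]
    intro x₀ hx₀
    obtain ⟨V, hKV, hVopen, hV⟩ :=
      (K n m x₀).exists_isOpen_lt_of_lt _ hx₀
    obtain ⟨δ, hδ, hthick⟩ :=
      (hKcomp n m x₀).exists_thickening_subset_open hVopen hKV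
    obtain ⟨M, hM⟩ := (hC m).isBounded.exists_norm_le
    set R : ℝ := max M 1 with hR
    have hRpos : (0 : ℝ) < R := lt_of_lt_of_le one_pos (le_max_right _ _)
    refine ⟨δ / R, div_pos hδ hRpos, ?_⟩
    intro x hx
    rw [mem_ball, Real.dist_eq] at hx
    have hsub : K n m x ⊆ thickening δ (K n m x₀) := by
      rintro z ⟨⟨a, b⟩, hp, rfl⟩
      rw [mem_thickening_iff]
      refine ⟨a + x₀ * b, ⟨(a, b), hp, rfl⟩, ?_⟩
      have hb : |b| ≤ R := le_trans (hM b hp.2) (le_max_left _ _)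
      have : dist (a + x * b) (a + x₀ * b) = |x - x₀| * |b| := by
        rw [Real.dist_eq, ← abs_mul]
        ring_nf
      rw [this]
      calc |x - x₀| * |b| ≤ |x - x₀| * R :=
            mul_le_mul_of_nonneg_left hb (abs_nonneg _)
        _ < (δ / R) * R := by
            exact mul_lt_mul_of_pos_right hx hRpos
        _ = δ := div_mul_cancel₀ _ (ne_of_gt hRpos)
    exact lt_of_le_of_lt (measure_mono (hsub.trans hthick)) hV
  have hdense : ∀ n m k, Dense (U n m k) := by
    intro n m k
    refine Rat.denseRange_cast.mono ?_
    rintro _ ⟨q, rfl⟩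
    show volume (K n m (q : ℝ)) < _
    have hsub : K n m (q : ℝ) ⊆ S (q : ℝ) := by
      rintro z ⟨⟨a, b⟩, hp, rfl⟩
      refine ⟨a, ?_, b, ?_, rfl⟩
      · have : a ∈ (A : Set ℝ) := by
          rw [hA]; exact mem_iUnion.2 ⟨n, hp.1⟩
        exact this
      · have : b ∈ (A : Set ℝ) := by
          rw [hA]; exact mem_iUnion.2 ⟨m, hp.2⟩
        exact this
    rw [measure_mono_null hsub (hrat q)]
    exact ENNReal.inv_pos.mpr (by simp)
  have hres : (⋂ n, ⋂ m, ⋂ k, U n m k) ∈ residual ℝ := by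
    refine (countable_iInter_mem).mpr fun n => (countable_iInter_mem).mpr fun m =>
      (countable_iInter_mem).mpr fun k => residual_of_dense_open (hopen n m k) (hdense n m k)
  have hG : ∀ x ∈ ⋂ n, ⋂ m, ⋂ k, U n m k, volume (S x) = 0 := by
    intro x hx
    have hxk : ∀ n m, volume (K n m x) = 0 := by
      intro n m
      by_contra h
      obtain ⟨j, hj⟩ := ENNReal.exists_inv_nat_lt h
      have hmem : volume (K n m x) < ((j : ℝ≥0∞) + 1)⁻¹ :=
        mem_iInter.1 (mem_iInter.1 (mem_iInter.1 hx n) m) j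
      have h2 : ((j : ℝ≥0∞) + 1)⁻¹ ≤ (j : ℝ≥0∞)⁻¹ :=
        ENNReal.inv_le_inv.mpr le_self_add
      exact absurd (hj.trans (hmem.trans_le h2)) (lt_irrefl _)
    have hSsub : S x ⊆ ⋃ n, ⋃ m, K n m x := by
      rintro z ⟨a, ha, b, hb, rfl⟩
      have ha' : a ∈ ⋃ n, C n := hA ▸ (SetLike.mem_coe.mpr ha)
      have hb' : b ∈ ⋃ n, C n := hA ▸ (SetLike.mem_coe.mpr hb)
      obtain ⟨n, hn⟩ := mem_iUnion.1 ha'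
      obtain ⟨m, hm⟩ := mem_iUnion.1 hb'
      exact mem_iUnion.2 ⟨n, mem_iUnion.2 ⟨m, ⟨(a, b), ⟨hn, hm⟩, rfl⟩⟩⟩
    exact measure_mono_null hSsub
      (measure_iUnion_null fun n => measure_iUnion_null fun m => hxk n m)
  constructor
  · exact mem_of_superset hres fun x hx => hG x hx
  · have hirr : {x : ℝ | Irrational x} ∈ residual ℝ := eventually_residual_irrational
    have hboth : ({x : ℝ | Irrational x} ∩ {x : ℝ | volume (S x) = 0}) ∈ residual ℝ :=
      inter_mem hirr (mem_of_superset hres fun x hx => hG x hx)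
    obtain ⟨x, hx1, hx2⟩ := (dense_of_mem_residual hboth).nonempty
    exact ⟨x, hx1, hx2⟩
end
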